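/- arXiv:1802.08334 — 5 statements merged into one kernel-verified Lean document; each statement's English description precedes it below -/
import Mathlib

section
/- Let Z ~ N(0, σ²) be a centered Gaussian with variance σ² > 0. Then for every real t, P[|t + Z| ≥ σ] ≥ P[|Z| ≥ σ] ≥ 3/10. -/
open MeasureTheory ProbabilityTheory Real
open scoped NNReal

section Stmt3Aux

/-- The Gaussian pdf is smaller at points of larger absolute value. -/
lemma gauss_pdf_anti {v : ℝ≥0} {a b : ℝ} (h : |a| ≤ |b|) :
    gaussianPDFReal 0 v b ≤ gaussianPDFReal 0 v a := by
  unfold gaussianPDFReal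
  have h2 : a ^ 2 ≤ b ^ 2 := by
    rw [← sq_abs a, ← sq_abs b]
    exact pow_le_pow_left₀ (abs_nonneg a) h 2
  have hmul : (0:ℝ) ≤ (√(2 * π * v))⁻¹ := by positivity
  apply mul_le_mul_of_nonneg_left _ hmul
  apply Real.exp_le_exp.mpr
  have hd : (0:ℝ) ≤ 2 * v := by positivity
  rcases hd.eq_or_lt with hd0 | hd0
  · rw [← hd0]
    simp
  · have hnum : -(b - 0) ^ 2 ≤ -(a - 0) ^ 2 := by nlinarith
    exact div_le_div_of_nonneg_right hnum hd0.le

lemma gauss_pdf_even (v : ℝ≥0) (x : ℝ) :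
    gaussianPDFReal 0 v (-x) = gaussianPDFReal 0 v x := by
  unfold gaussianPDFReal
  ring_nf

lemma gauss_intervalIntegrable (v : ℝ≥0) (a b : ℝ) :
    IntervalIntegrable (gaussianPDFReal 0 v) volume a b :=
  (integrable_gaussianPDFReal 0 v).intervalIntegrable

lemma gauss_intervalIntegrable_shift (v : ℝ≥0) (c a b : ℝ) :
    IntervalIntegrable (fun x => gaussianPDFReal 0 v (x + c)) volume a b :=
  ((integrable_gaussianPDFReal 0 v).comp_add_right c).intervalIntegrable

/-- Even reflection of the interval integral. -/
lemma gauss_integral_neg (v : ℝ≥0) (a b : ℝ) :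
    ∫ x in a..b, gaussianPDFReal 0 v x = ∫ x in (-b)..(-a), gaussianPDFReal 0 v x := by
  rw [← intervalIntegral.integral_comp_neg (fun x => gaussianPDFReal 0 v x)]
  simp_rw [gauss_pdf_even]

/-- Shifting an interval of fixed length away from the center decreases the Gaussian mass,
    case `t ≥ 0`. -/
lemma gauss_shift_le_of_nonneg (v : ℝ≥0) {σ t : ℝ} (hσ : 0 < σ) (ht : 0 ≤ t) :
    ∫ x in (-σ - t)..(σ - t), gaussianPDFReal 0 v x
      ≤ ∫ x in (-σ)..σ, gaussianPDFReal 0 v x := by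
  rcases le_or_gt t (2 * σ) with hcase | hcase
  · -- small shift : compare the two boundary pieces
    have h1 : ∫ x in (-σ - t)..(σ - t), gaussianPDFReal 0 v x
        = (∫ x in (-σ - t)..(-σ), gaussianPDFReal 0 v x)
          + ∫ x in (-σ)..(σ - t), gaussianPDFReal 0 v x := by
      rw [intervalIntegral.integral_add_adjacent_intervals (gauss_intervalIntegrable v _ _)
        (gauss_intervalIntegrable v _ _)]
    have h2 : ∫ x in (-σ)..σ, gaussianPDFReal 0 v x
        = (∫ x in (-σ)..(σ - t), gaussianPDFReal 0 v x)
          + ∫ x in (σ - t)..σ, gaussianPDFReal 0 v x := by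
      rw [intervalIntegral.integral_add_adjacent_intervals (gauss_intervalIntegrable v _ _)
        (gauss_intervalIntegrable v _ _)]
    rw [h1, h2]
    have key : ∫ x in (-σ - t)..(-σ), gaussianPDFReal 0 v x
        ≤ ∫ x in (σ - t)..σ, gaussianPDFReal 0 v x := by
      have e1 : ∫ x in (-σ - t)..(-σ), gaussianPDFReal 0 v x
          = ∫ x in σ..(σ + t), gaussianPDFReal 0 v x := by
        rw [gauss_integral_neg v σ (σ + t)]
        ring_nf
      have e2 : ∫ x in σ..(σ + t), gaussianPDFReal 0 v x
          = ∫ x in (σ - t)..σ, gaussianPDFReal 0 v (x + t) := by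
        rw [intervalIntegral.integral_comp_add_right (fun x => gaussianPDFReal 0 v x) t]
        ring_nf
      rw [e1, e2]
      apply intervalIntegral.integral_mono_on (by linarith)
        (gauss_intervalIntegrable_shift v t _ _) (gauss_intervalIntegrable v _ _)
      intro x hx
      apply gauss_pdf_anti
      have hx1 : σ - t ≤ x := hx.1
      have hx2 : x ≤ σ := hx.2
      rw [abs_le]
      constructor
      · rw [abs_of_nonneg (by linarith)]; linarith
      · rw [abs_of_nonneg (by linarith)]; linarith
    linarith
  · -- large shift : the whole interval is far from the origin
    have e1 : ∫ x in (-σ - t)..(σ - t), gaussianPDFReal 0 v x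
        = ∫ x in (-σ)..σ, gaussianPDFReal 0 v (x + -t) := by
      rw [intervalIntegral.integral_comp_add_right (fun x => gaussianPDFReal 0 v x) (-t)]
      ring_nf
    rw [e1]
    apply intervalIntegral.integral_mono_on (by linarith)
      (gauss_intervalIntegrable_shift v (-t) _ _) (gauss_intervalIntegrable v _ _)
    intro x hx
    apply gauss_pdf_anti
    have hx1 : -σ ≤ x := hx.1
    have hx2 : x ≤ σ := hx.2
    rw [abs_le]
    constructor
    · rw [abs_of_nonpos (by linarith)]; linarith
    · rw [abs_of_nonpos (by linarith)]; linarith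

/-- Shifting an interval of fixed length decreases the Gaussian mass, any shift. -/
lemma gauss_shift_le (v : ℝ≥0) {σ : ℝ} (t : ℝ) (hσ : 0 < σ) :
    ∫ x in (-σ - t)..(σ - t), gaussianPDFReal 0 v x
      ≤ ∫ x in (-σ)..σ, gaussianPDFReal 0 v x := by
  rcases le_or_gt 0 t with ht | ht
  · exact gauss_shift_le_of_nonneg v hσ ht
  · have e : ∫ x in (-σ - t)..(σ - t), gaussianPDFReal 0 v x
        = ∫ x in (-σ - (-t))..(σ - (-t)), gaussianPDFReal 0 v x := by
      rw [gauss_integral_neg v (-σ - (-t)) (σ - (-t))]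
      ring_nf
    rw [e]
    exact gauss_shift_le_of_nonneg v hσ (by linarith)

lemma exp_neg_le_quad {y : ℝ} (hy : 0 ≤ y) : rexp (-y) ≤ 1 - y + y ^ 2 / 2 := by
  have h1 : 1 + y + y ^ 2 / 2 ≤ rexp y := Real.quadratic_le_exp_of_nonneg hy
  have h2 : (0:ℝ) < 1 + y + y ^ 2 / 2 := by nlinarith
  rw [Real.exp_neg]
  have h3 : (rexp y)⁻¹ ≤ (1 + y + y ^ 2 / 2)⁻¹ := by
    apply inv_anti₀ h2 h1
  refine h3.trans ?_
  rw [inv_le_iff_one_le_mul₀ h2]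
  nlinarith

/-- The centered-interval Gaussian mass is at most 7/10. -/
lemma gauss_centered_le {σ : ℝ} (hσ : 0 < σ) :
    ∫ x in (-σ)..σ, gaussianPDFReal 0 (⟨σ ^ 2, sq_nonneg σ⟩ : ℝ≥0) x ≤ 7 / 10 := by
  set v : ℝ≥0 := ⟨σ ^ 2, sq_nonneg σ⟩ with hv
  have hvr : (v : ℝ) = σ ^ 2 := rfl
  have hC : (√(2 * π * v))⁻¹ = (σ * √(2 * π))⁻¹ := by
    rw [hvr, show 2 * π * σ ^ 2 = σ ^ 2 * (2 * π) by ring,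
      Real.sqrt_mul (sq_nonneg σ), Real.sqrt_sq hσ.le]
  -- pointwise bound by a polynomial
  have hpt : ∀ x ∈ Set.Icc (-σ) σ, gaussianPDFReal 0 v x
      ≤ (σ * √(2 * π))⁻¹ * (1 - x ^ 2 / (2 * σ ^ 2) + x ^ 4 / (8 * σ ^ 4)) := by
    intro x _
    unfold gaussianPDFReal
    rw [hC]
    have h1 : rexp (-(x - 0) ^ 2 / (2 * v)) ≤ 1 - x ^ 2 / (2 * σ ^ 2) + x ^ 4 / (8 * σ ^ 4) := by
      have hy : 0 ≤ x ^ 2 / (2 * σ ^ 2) := by positivity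
      have := exp_neg_le_quad hy
      have e : -(x - 0) ^ 2 / (2 * (v:ℝ)) = -(x ^ 2 / (2 * σ ^ 2)) := by
        rw [hvr]; ring
      rw [e]
      refine this.trans_eq ?_
      field_simp
      ring
    gcongr
  have hmono : ∫ x in (-σ)..σ, gaussianPDFReal 0 v x
      ≤ ∫ x in (-σ)..σ, (σ * √(2 * π))⁻¹ * (1 - x ^ 2 / (2 * σ ^ 2) + x ^ 4 / (8 * σ ^ 4)) := by
    apply intervalIntegral.integral_mono_on (by linarith) (gauss_intervalIntegrable v _ _)
    · apply IntervalIntegrable.const_mul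
      apply IntervalIntegrable.add
      · apply IntervalIntegrable.sub intervalIntegrable_const
        exact ((intervalIntegral.intervalIntegrable_pow 2).div_const _)
      · exact ((intervalIntegral.intervalIntegrable_pow 4).div_const _)
    · exact hpt
  refine hmono.trans ?_
  have hInt : ∫ x in (-σ)..σ, (σ * √(2 * π))⁻¹ * (1 - x ^ 2 / (2 * σ ^ 2) + x ^ 4 / (8 * σ ^ 4))
      = (σ * √(2 * π))⁻¹ * (103 / 60 * σ) := by
    rw [intervalIntegral.integral_const_mul]
    congr 1
    have e : ∀ x : ℝ, 1 - x ^ 2 / (2 * σ ^ 2) + x ^ 4 / (8 * σ ^ 4)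
        = 1 - x ^ 2 * (2 * σ ^ 2)⁻¹ + x ^ 4 * (8 * σ ^ 4)⁻¹ := by
      intro x; ring
    simp_rw [e]
    rw [intervalIntegral.integral_add, intervalIntegral.integral_sub,
      intervalIntegral.integral_const, intervalIntegral.integral_mul_const,
      intervalIntegral.integral_mul_const, integral_pow, integral_pow]
    · have hσ2 : σ ^ 2 ≠ 0 := by positivity
      have hσ4 : σ ^ 4 ≠ 0 := by positivity
      field_simp
      ring
    · exact intervalIntegrable_const
    · exact ((intervalIntegral.intervalIntegrable_pow 2).mul_const _)
    · exact IntervalIntegrable.sub intervalIntegrable_const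
        ((intervalIntegral.intervalIntegrable_pow 2).mul_const _)
    · exact ((intervalIntegral.intervalIntegrable_pow 4).mul_const _)
  rw [hInt]
  have hsq : (103 : ℝ) / 42 ≤ √(2 * π) := by
    have h1 : ((103:ℝ)/42) ^ 2 ≤ 2 * π := by nlinarith [Real.pi_gt_d6]
    calc (103:ℝ)/42 = √(((103:ℝ)/42) ^ 2) := (Real.sqrt_sq (by norm_num)).symm
    _ ≤ √(2 * π) := Real.sqrt_le_sqrt h1
  have hsqpos : (0:ℝ) < √(2 * π) := lt_of_lt_of_le (by norm_num) hsq
  rw [mul_inv, mul_comm ((σ)⁻¹) _, mul_assoc, mul_comm ((σ:ℝ)⁻¹) _, mul_assoc,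
    mul_inv_cancel₀ hσ.ne', mul_one]
  rw [inv_mul_le_iff₀ hsqpos]
  nlinarith [hsq]

end Stmt3Aux

theorem stmt_3 (σ : ℝ) (hσ : 0 < σ) (t : ℝ) :
    (3 : ℝ) / 10 ≤ ((gaussianReal 0 ⟨σ ^ 2, sq_nonneg σ⟩) {z : ℝ | σ ≤ |z|}).toReal ∧
    ((gaussianReal 0 ⟨σ ^ 2, sq_nonneg σ⟩) {z : ℝ | σ ≤ |z|}).toReal ≤
      ((gaussianReal 0 ⟨σ ^ 2, sq_nonneg σ⟩) {z : ℝ | σ ≤ |t + z|}).toReal := by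
  set v : ℝ≥0 := ⟨σ ^ 2, sq_nonneg σ⟩ with hvdef
  have hv : v ≠ 0 := by
    intro h
    have : (v : ℝ) = 0 := by rw [h]; rfl
    have : σ ^ 2 = 0 := this
    nlinarith
  set μ : Measure ℝ := gaussianReal 0 v with hμ
  have hprob : IsProbabilityMeasure μ := by rw [hμ]; infer_instance
  -- measure of the complement intervals
  have hcompl : ∀ s : ℝ, {z : ℝ | σ ≤ |s + z|} = (Set.Ioo (-σ - s) (σ - s))ᶜ := by
    intro s
    ext z
    simp only [Set.mem_setOf_eq, Set.mem_compl_iff, Set.mem_Ioo, not_and, not_lt]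
    constructor
    · intro h h1
      by_contra hc
      push_neg at hc
      have habs : |s + z| < σ := abs_lt.mpr ⟨by linarith, by linarith⟩
      linarith
    · intro h
      rcases le_or_gt σ |s + z| with h2 | h2
      · exact h2
      · rcases abs_lt.mp h2 with ⟨h3, h4⟩
        have := h (by linarith)
        linarith
  have hIoo : ∀ a b : ℝ, a ≤ b → (μ (Set.Ioo a b)).toReal
      = ∫ x in a..b, gaussianPDFReal 0 v x := by
    intro a b hab
    rw [hμ, gaussianReal_apply_eq_integral 0 hv, ENNReal.toReal_ofReal
      (setIntegral_nonneg measurableSet_Ioo fun x _ => gaussianPDFReal_nonneg 0 v x),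
      intervalIntegral.integral_of_le hab, integral_Ioc_eq_integral_Ioo]
  have hmeasIoo : ∀ a b : ℝ, μ (Set.Ioo a b) ≠ ⊤ := fun a b => measure_ne_top μ _
  have htoReal : ∀ s : ℝ, (μ {z : ℝ | σ ≤ |s + z|}).toReal
      = 1 - (μ (Set.Ioo (-σ - s) (σ - s))).toReal := by
    intro s
    rw [hcompl s, measure_compl measurableSet_Ioo (hmeasIoo _ _),
      measure_univ, ENNReal.toReal_sub_of_le prob_le_one (by norm_num)]
    simp
  have hzero : {z : ℝ | σ ≤ |z|} = {z : ℝ | σ ≤ |(0:ℝ) + z|} := by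
    simp
  have hcen : (μ {z : ℝ | σ ≤ |z|}).toReal
      = 1 - (μ (Set.Ioo (-σ - 0) (σ - 0))).toReal := by
    rw [hzero, htoReal 0]
  constructor
  · rw [hcen]
    have h1 : (μ (Set.Ioo (-σ - 0) (σ - 0))).toReal ≤ 7 / 10 := by
      rw [hIoo _ _ (by linarith)]
      simpa using gauss_centered_le hσ
    linarith
  · rw [hcen, htoReal t]
    have h2 : (μ (Set.Ioo (-σ - t) (σ - t))).toReal
        ≤ (μ (Set.Ioo (-σ - 0) (σ - 0))).toReal := by
      rw [hIoo _ _ (by linarith), hIoo _ _ (by linarith)]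
      simpa using gauss_shift_le v t hσ
    linarith
end

section
/- Let Q ∈ ℝ^{T×d}, let 0 ≺ Γ_min ⪯ Γ_max be positive definite d × d matrices, and let T be a 1/4-net of the shell S_{Γ_min} = {w : wᵀΓ_min w = 1} in the norm ‖Γ_max^{1/2}(·)‖₂. If inf_{w ∈ T} wᵀ QᵀQ w ≥ 1 and QᵀQ ⪯ Γ_max, then QᵀQ ⪰ Γ_min/2. -/
open Matrix

/-- `T` is an `ε`-net of the shell `{w : wᵀ Γmin w = 1}` in the norm `‖Γmax^{1/2} ·‖₂`. -/
def IsShellNet {d : ℕ} (Γmin Γmax : Matrix (Fin d) (Fin d) ℝ) (ε : ℝ)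
    (T : Finset (Fin d → ℝ)) : Prop :=
  (∀ v ∈ T, v ⬝ᵥ Γmin *ᵥ v = 1) ∧
    ∀ w : Fin d → ℝ, w ⬝ᵥ Γmin *ᵥ w = 1 →
      ∃ v ∈ T, Real.sqrt ((w - v) ⬝ᵥ Γmax *ᵥ (w - v)) ≤ ε


lemma nrm_eq {n : ℕ} (a : Fin n → ℝ) :
    Real.sqrt (a ⬝ᵥ a) = ‖(WithLp.equiv 2 (Fin n → ℝ)).symm a‖ := by
  rw [EuclideanSpace.norm_eq]
  congr 1
  simp [dotProduct, sq]

lemma nrm_triangle {n : ℕ} (a b : Fin n → ℝ) :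
    Real.sqrt ((a + b) ⬝ᵥ (a + b)) ≤ Real.sqrt (a ⬝ᵥ a) + Real.sqrt (b ⬝ᵥ b) := by
  rw [nrm_eq, nrm_eq, nrm_eq]
  rw [show (WithLp.equiv 2 (Fin n → ℝ)).symm (a + b)
      = (WithLp.equiv 2 (Fin n → ℝ)).symm a + (WithLp.equiv 2 (Fin n → ℝ)).symm b from rfl]
  exact norm_add_le _ _

lemma dps_nonneg {n : ℕ} (a : Fin n → ℝ) : 0 ≤ a ⬝ᵥ a :=
  Finset.sum_nonneg fun i _ => mul_self_nonneg (a i)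

lemma quad_eq {T d : ℕ} (Q : Matrix (Fin T) (Fin d) ℝ) (x : Fin d → ℝ) :
    x ⬝ᵥ (Qᵀ * Q) *ᵥ x = (Q *ᵥ x) ⬝ᵥ (Q *ᵥ x) := by
  rw [← mulVec_mulVec, dotProduct_mulVec, vecMul_transpose]

theorem stmt_10 (T d : ℕ) (Q : Matrix (Fin T) (Fin d) ℝ)
    (Γmin Γmax : Matrix (Fin d) (Fin d) ℝ)
    (hmin : Γmin.PosDef) (hle : (Γmax - Γmin).PosSemidef)
    (N : Finset (Fin d → ℝ)) (hN : IsShellNet Γmin Γmax (1 / 4) N)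
    (hlb : ∀ v ∈ N, 1 ≤ v ⬝ᵥ (Qᵀ * Q) *ᵥ v)
    (hub : (Γmax - Qᵀ * Q).PosSemidef) :
    (Qᵀ * Q - (1 / 2 : ℝ) • Γmin).PosSemidef := by
  have key : ∀ w : Fin d → ℝ, w ⬝ᵥ Γmin *ᵥ w = 1 →
      (1 : ℝ) / 2 ≤ w ⬝ᵥ (Qᵀ * Q) *ᵥ w := by
    intro w hw
    obtain ⟨v, hvN, hdist⟩ := hN.2 w hw
    have hQv : (1 : ℝ) ≤ Real.sqrt ((Q *ᵥ v) ⬝ᵥ (Q *ᵥ v)) := by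
      have h1 := hlb v hvN
      rw [quad_eq] at h1
      nlinarith [Real.sq_sqrt (dps_nonneg (Q *ᵥ v)),
        Real.sqrt_nonneg ((Q *ᵥ v) ⬝ᵥ (Q *ᵥ v))]
    have hsub : Real.sqrt ((Q *ᵥ (w - v)) ⬝ᵥ (Q *ᵥ (w - v))) ≤ 1 / 4 := by
      refine le_trans ?_ hdist
      apply Real.sqrt_le_sqrt
      have h2 := hub.dotProduct_mulVec_nonneg (w - v)
      simp only [star_trivial, sub_mulVec, dotProduct_sub] at h2
      rw [← quad_eq]
      linarith
    have htri : Real.sqrt ((Q *ᵥ v) ⬝ᵥ (Q *ᵥ v))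
        ≤ Real.sqrt ((Q *ᵥ w) ⬝ᵥ (Q *ᵥ w))
          + Real.sqrt ((Q *ᵥ (w - v)) ⬝ᵥ (Q *ᵥ (w - v))) := by
      have h2 : Q *ᵥ v = Q *ᵥ w + (-(Q *ᵥ (w - v))) := by
        rw [mulVec_sub]; abel
      calc Real.sqrt ((Q *ᵥ v) ⬝ᵥ (Q *ᵥ v))
          = Real.sqrt ((Q *ᵥ w + (-(Q *ᵥ (w - v)))) ⬝ᵥ (Q *ᵥ w + (-(Q *ᵥ (w - v))))) := by
            rw [← h2]
        _ ≤ Real.sqrt ((Q *ᵥ w) ⬝ᵥ (Q *ᵥ w))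
            + Real.sqrt ((-(Q *ᵥ (w - v))) ⬝ᵥ (-(Q *ᵥ (w - v)))) := nrm_triangle _ _
        _ = Real.sqrt ((Q *ᵥ w) ⬝ᵥ (Q *ᵥ w))
            + Real.sqrt ((Q *ᵥ (w - v)) ⬝ᵥ (Q *ᵥ (w - v))) := by
            rw [neg_dotProduct, dotProduct_neg, neg_neg]
    have hQw : (3 : ℝ) / 4 ≤ Real.sqrt ((Q *ᵥ w) ⬝ᵥ (Q *ᵥ w)) := by linarith
    rw [quad_eq]
    nlinarith [Real.sq_sqrt (dps_nonneg (Q *ᵥ w))]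
  refine posSemidef_iff_dotProduct_mulVec.mpr ⟨?_, ?_⟩
  · have ht : (Qᵀ * Q).IsHermitian := by
      have := isHermitian_conjTranspose_mul_self Q
      rwa [conjTranspose_eq_transpose_of_trivial] at this
    show _ = _
    rw [conjTranspose_sub, conjTranspose_smul, ht.eq, star_trivial, hmin.1.eq]
  · intro x
    simp only [star_trivial, sub_mulVec, dotProduct_sub, smul_mulVec, dotProduct_smul,
      smul_eq_mul, sub_nonneg]
    rcases eq_or_ne x 0 with rfl | hx
    · simp
    · have hc : 0 < x ⬝ᵥ Γmin *ᵥ x := by simpa using hmin.dotProduct_mulVec_pos hx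
      set c := x ⬝ᵥ Γmin *ᵥ x with hcdef
      have hcs : 0 < Real.sqrt c := Real.sqrt_pos.mpr hc
      have h2 : Real.sqrt c * Real.sqrt c = c := Real.mul_self_sqrt hc.le
      set w : Fin d → ℝ := (Real.sqrt c)⁻¹ • x with hwdef
      have hscale : ∀ M : Matrix (Fin d) (Fin d) ℝ,
          w ⬝ᵥ M *ᵥ w = (Real.sqrt c)⁻¹ * ((Real.sqrt c)⁻¹ * (x ⬝ᵥ M *ᵥ x)) := by
        intro M
        rw [hwdef, mulVec_smul, dotProduct_smul, smul_dotProduct, smul_eq_mul, smul_eq_mul]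
      have hw1 : w ⬝ᵥ Γmin *ᵥ w = 1 := by
        rw [hscale, ← hcdef]
        field_simp
        rw [Real.sq_sqrt hc.le]
      have hk := key w hw1
      rw [hscale] at hk
      calc (1:ℝ)/2 * c = (Real.sqrt c * Real.sqrt c) * ((1:ℝ)/2) := by rw [h2]; ring
        _ ≤ (Real.sqrt c * Real.sqrt c)
            * ((Real.sqrt c)⁻¹ * ((Real.sqrt c)⁻¹ * (x ⬝ᵥ (Qᵀ * Q) *ᵥ x))) :=
            mul_le_mul_of_nonneg_left hk (by positivity)
        _ = x ⬝ᵥ (Qᵀ * Q) *ᵥ x := by field_simp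
end

section
/- Let Q ∈ ℝ^{n×m} have full column rank, q ∈ ℝⁿ, let 0 ≺ Γ_min ⪯ QᵀQ ⪯ Γ_max, and let T be a 1/4-net of the shell S_{Γ_min} = {w : wᵀΓ_min w = 1} in the norm ‖Γ_max^{1/2}(·)‖₂. Then sup over unit vectors w ∈ S^{m−1} of ⟨Qw, q⟩/‖Qw‖ is at most 2·max_{w ∈ T} ⟨Qw, q⟩/‖Qw‖. -/
open Matrix

/-- Euclidean norm on `Fin n → ℝ`. -/
noncomputable def enorm₂ {n : ℕ} (x : Fin n → ℝ) : ℝ := Real.sqrt (∑ i, x i ^ 2)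

namespace Stmt12Aux

/-- Identify `Fin k → ℝ` with Euclidean space. -/
noncomputable def toE {k : ℕ} (x : Fin k → ℝ) : EuclideanSpace ℝ (Fin k) :=
  (WithLp.equiv 2 (Fin k → ℝ)).symm x

lemma enorm_eq_norm {k : ℕ} (x : Fin k → ℝ) : enorm₂ x = ‖toE x‖ := by
  rw [toE, EuclideanSpace.norm_eq]
  simp [enorm₂, sq_abs]

lemma dot_eq_inner {k : ℕ} (x y : Fin k → ℝ) :
    x ⬝ᵥ y = (inner ℝ (toE x) (toE y) : ℝ) := by
  simp [toE, inner, dotProduct, mul_comm]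

lemma toE_smul {k : ℕ} (c : ℝ) (x : Fin k → ℝ) : toE (c • x) = c • toE x := rfl

lemma toE_sub {k : ℕ} (x y : Fin k → ℝ) : toE (x - y) = toE x - toE y := rfl

lemma enorm_nonneg {k : ℕ} (x : Fin k → ℝ) : 0 ≤ enorm₂ x := Real.sqrt_nonneg _

lemma enorm_sq {k : ℕ} (x : Fin k → ℝ) : enorm₂ x ^ 2 = x ⬝ᵥ x := by
  rw [enorm_eq_norm, dot_eq_inner, ← real_inner_self_eq_norm_sq]

lemma enorm_smul {k : ℕ} (c : ℝ) (x : Fin k → ℝ) : enorm₂ (c • x) = |c| * enorm₂ x := by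
  rw [enorm_eq_norm, enorm_eq_norm, toE_smul, norm_smul, Real.norm_eq_abs]

lemma enorm_eq_zero_iff {k : ℕ} (x : Fin k → ℝ) : enorm₂ x = 0 ↔ x = 0 := by
  rw [enorm_eq_norm, norm_eq_zero]
  constructor
  · intro h
    have : toE x = toE 0 := by simpa [toE] using h
    exact (WithLp.equiv 2 (Fin k → ℝ)).symm.injective this
  · rintro rfl; simp [toE]

lemma enorm_neg {k : ℕ} (x : Fin k → ℝ) : enorm₂ (-x) = enorm₂ x := by
  have : (-x) = (-1 : ℝ) • x := by simp
  rw [this, enorm_smul]; simp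

/-- Quadratic form identity. -/
lemma dot_mulVec_mulVec {n m : ℕ} (Q : Matrix (Fin n) (Fin m) ℝ) (w v : Fin m → ℝ) :
    (Q *ᵥ w) ⬝ᵥ (Q *ᵥ v) = w ⬝ᵥ (Qᵀ * Q) *ᵥ v := by
  rw [dotProduct_mulVec, dotProduct_mulVec, ← vecMul_transpose, vecMul_vecMul]

/-- The ratio function. -/
noncomputable def gfun {n m : ℕ} (Q : Matrix (Fin n) (Fin m) ℝ) (q : Fin n → ℝ)
    (w : Fin m → ℝ) : ℝ := (Q *ᵥ w) ⬝ᵥ q / enorm₂ (Q *ᵥ w)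

lemma gfun_smul {n m : ℕ} (Q : Matrix (Fin n) (Fin m) ℝ) (q : Fin n → ℝ)
    {c : ℝ} (hc : 0 < c) (u : Fin m → ℝ) : gfun Q q (c • u) = gfun Q q u := by
  unfold gfun
  rw [mulVec_smul, smul_dotProduct, smul_eq_mul, enorm_smul, abs_of_pos hc,
    mul_div_mul_left _ _ (ne_of_gt hc)]

lemma gfun_neg {n m : ℕ} (Q : Matrix (Fin n) (Fin m) ℝ) (q : Fin n → ℝ)
    (u : Fin m → ℝ) : gfun Q q (-u) = - gfun Q q u := by
  unfold gfun
  rw [mulVec_neg, neg_dotProduct, enorm_neg, neg_div]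

/-- Lipschitz-type estimate for normalized vectors. -/
lemma lip_aux {F : Type*} [NormedAddCommGroup F] [NormedSpace ℝ F] (a b : F)
    (ha : 1 ≤ ‖a‖) (hb : 1 ≤ ‖b‖) (hab : ‖a - b‖ ≤ 1 / 4) :
    ‖‖a‖⁻¹ • a - ‖b‖⁻¹ • b‖ ≤ 1 / 2 := by
  have ha0 : (0 : ℝ) < ‖a‖ := lt_of_lt_of_le one_pos ha
  have hb0 : (0 : ℝ) < ‖b‖ := lt_of_lt_of_le one_pos hb
  have key : ‖a‖⁻¹ • a - ‖b‖⁻¹ • b = ‖a‖⁻¹ • (a - b) + (‖a‖⁻¹ - ‖b‖⁻¹) • b := by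
    rw [smul_sub, sub_smul]; abel
  have h1 : ‖‖a‖⁻¹ • (a - b)‖ ≤ 1 / 4 := by
    rw [norm_smul, Real.norm_eq_abs, abs_of_pos (inv_pos.mpr ha0)]
    calc ‖a‖⁻¹ * ‖a - b‖ ≤ 1 * ‖a - b‖ := by
          apply mul_le_mul_of_nonneg_right _ (norm_nonneg _)
          exact inv_le_one_of_one_le₀ ha
      _ ≤ 1 / 4 := by linarith
  have h2 : ‖(‖a‖⁻¹ - ‖b‖⁻¹) • b‖ ≤ 1 / 4 := by
    rw [norm_smul, Real.norm_eq_abs]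
    have habs : |‖a‖⁻¹ - ‖b‖⁻¹| = |‖b‖ - ‖a‖| / (‖a‖ * ‖b‖) := by
      rw [inv_sub_inv (ne_of_gt ha0) (ne_of_gt hb0), abs_div,
        abs_of_pos (mul_pos ha0 hb0)]
    have hba : |‖b‖ - ‖a‖| ≤ ‖a - b‖ := by
      rw [abs_sub_comm]; exact abs_norm_sub_norm_le a b
    rw [habs]
    have : |‖b‖ - ‖a‖| / (‖a‖ * ‖b‖) * ‖b‖ = |‖b‖ - ‖a‖| / ‖a‖ := by
      field_simp
    rw [this]
    calc |‖b‖ - ‖a‖| / ‖a‖ ≤ |‖b‖ - ‖a‖| / 1 :=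
          div_le_div_of_nonneg_left (abs_nonneg _) one_pos ha
      _ = |‖b‖ - ‖a‖| := div_one _
      _ ≤ ‖a - b‖ := hba
      _ ≤ 1 / 4 := hab
  calc ‖‖a‖⁻¹ • a - ‖b‖⁻¹ • b‖ ≤ ‖‖a‖⁻¹ • (a - b)‖ + ‖(‖a‖⁻¹ - ‖b‖⁻¹) • b‖ := by
        rw [key]; exact norm_add_le _ _
    _ ≤ 1 / 2 := by linarith

end Stmt12Aux

open Stmt12Aux

theorem stmt_12 (n m : ℕ) (Q : Matrix (Fin n) (Fin m) ℝ)
    (hQ : Function.Injective Q.mulVec) (q : Fin n → ℝ)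
    (Γmin Γmax : Matrix (Fin m) (Fin m) ℝ) (hmin : Γmin.PosDef)
    (hlb : (Qᵀ * Q - Γmin).PosSemidef) (hub : (Γmax - Qᵀ * Q).PosSemidef)
    (N : Finset (Fin m → ℝ)) (hN : IsShellNet Γmin Γmax (1 / 4) N) :
    ∀ w : Fin m → ℝ, enorm₂ w = 1 →
      ∃ v ∈ N, (Q *ᵥ w) ⬝ᵥ q / enorm₂ (Q *ᵥ w) ≤ 2 * ((Q *ᵥ v) ⬝ᵥ q / enorm₂ (Q *ᵥ v)) := by
  intro w hw
  set g : (Fin m → ℝ) → ℝ := gfun Q q with hg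
  -- basic quadratic bounds
  have hQne : ∀ u : Fin m → ℝ, u ≠ 0 → Q *ᵥ u ≠ 0 := by
    intro u hu h
    exact hu (hQ (by simpa [Matrix.mulVec_zero] using h))
  have quad_lb : ∀ u : Fin m → ℝ, u ⬝ᵥ Γmin *ᵥ u ≤ enorm₂ (Q *ᵥ u) ^ 2 := by
    intro u
    have h0 : 0 ≤ u ⬝ᵥ (Qᵀ * Q - Γmin) *ᵥ u := by have := hlb.dotProduct_mulVec_nonneg u; simpa using this
    rw [sub_mulVec, dotProduct_sub] at h0
    rw [enorm_sq, dot_mulVec_mulVec]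
    linarith
  have quad_ub : ∀ u : Fin m → ℝ, enorm₂ (Q *ᵥ u) ^ 2 ≤ u ⬝ᵥ Γmax *ᵥ u := by
    intro u
    have h0 : 0 ≤ u ⬝ᵥ (Γmax - Qᵀ * Q) *ᵥ u := by have := hub.dotProduct_mulVec_nonneg u; simpa using this
    rw [sub_mulVec, dotProduct_sub] at h0
    rw [enorm_sq, dot_mulVec_mulVec]
    linarith
  have shell_norm : ∀ u : Fin m → ℝ, u ⬝ᵥ Γmin *ᵥ u = 1 → 1 ≤ enorm₂ (Q *ᵥ u) := by
    intro u hu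
    have h := quad_lb u
    rw [hu] at h
    nlinarith [enorm_nonneg (Q *ᵥ u)]
  -- continuity of G on the sphere
  set E := EuclideanSpace ℝ (Fin m) with hE
  set G : E → ℝ := fun x => g ((WithLp.equiv 2 (Fin m → ℝ)) x) with hG
  have hsphere : ∀ x : E, x ∈ Metric.sphere (0 : E) 1 → ‖x‖ = 1 := by
    intro x hx; simpa using hx
  have hmemsphere : ∀ u : Fin m → ℝ, enorm₂ u = 1 → toE u ∈ Metric.sphere (0 : E) 1 := by
    intro u hu
    rw [mem_sphere_zero_iff_norm, ← enorm_eq_norm, hu]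
  have hGtoE : ∀ u : Fin m → ℝ, G (toE u) = g u := by
    intro u
    rw [hG]
    simp [toE]
  have hGcont : ContinuousOn G (Metric.sphere (0 : E) 1) := by
    have hQc : Continuous fun u : Fin m → ℝ => Q *ᵥ u := by
      have := Q.mulVecLin.continuous_of_finiteDimensional
      exact this
    have hdc : Continuous fun x : Fin n → ℝ => x ⬝ᵥ q := by
      unfold dotProduct; fun_prop
    have hec : Continuous fun x : Fin n → ℝ => enorm₂ x := by
      unfold enorm₂
      exact Real.continuous_sqrt.comp (by fun_prop)
    have heq : Continuous (WithLp.equiv 2 (Fin m → ℝ)) := PiLp.continuous_ofLp ..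
    apply ContinuousOn.div
    · exact ((hdc.comp (hQc.comp heq))).continuousOn
    · exact ((hec.comp (hQc.comp heq))).continuousOn
    · intro x hx
      have hx1 : ‖x‖ = 1 := hsphere x hx
      have hxne : (WithLp.equiv 2 (Fin m → ℝ)) x ≠ 0 := by
        intro h
        have : x = 0 := by
          have := congrArg (WithLp.equiv 2 (Fin m → ℝ)).symm h
          simpa using this
        rw [this] at hx1; simp at hx1
      intro h
      exact hQne _ hxne ((enorm_eq_zero_iff _).mp h)
  -- maximum on the sphere
  have hne : (Metric.sphere (0 : E) 1).Nonempty := ⟨toE w, hmemsphere w hw⟩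
  obtain ⟨x0, hx0s, hx0max⟩ :=
    (isCompact_sphere (0 : E) 1).exists_isMaxOn hne hGcont
  set S : ℝ := G x0 with hS
  have hS_ub : ∀ u : Fin m → ℝ, enorm₂ u = 1 → g u ≤ S := by
    intro u hu
    have h2 : G (toE u) ≤ S := hx0max (hmemsphere u hu)
    rwa [hGtoE u] at h2
  -- S ≥ 0
  have hw0 : enorm₂ ((WithLp.equiv 2 (Fin m → ℝ)) x0) = 1 := by
    rw [enorm_eq_norm]
    have : toE ((WithLp.equiv 2 (Fin m → ℝ)) x0) = x0 := by simp [toE]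
    rw [this]
    exact hsphere x0 hx0s
  set w0 : Fin m → ℝ := (WithLp.equiv 2 (Fin m → ℝ)) x0 with hw0def
  have hgw0 : g w0 = S := rfl
  have hS0 : 0 ≤ S := by
    have hneg : enorm₂ (-w0) = 1 := by rw [enorm_neg]; exact hw0
    have := hS_ub (-w0) hneg
    rw [hg, gfun_neg, ← hg, hgw0] at this
    linarith
  have hS_all : ∀ u : Fin m → ℝ, u ≠ 0 → g u ≤ S := by
    intro u hu
    have he : 0 < enorm₂ u := by
      rcases lt_or_eq_of_le (enorm_nonneg u) with h | h
      · exact h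
      · exact absurd ((enorm_eq_zero_iff u).mp h.symm) hu
    have hc : 0 < (enorm₂ u)⁻¹ := inv_pos.mpr he
    have h1 : enorm₂ ((enorm₂ u)⁻¹ • u) = 1 := by
      rw [enorm_smul, abs_of_pos hc, inv_mul_cancel₀ (ne_of_gt he)]
    have := hS_ub _ h1
    rwa [hg, gfun_smul Q q hc, ← hg] at this
  -- the key net estimate
  have hkey : ∀ u : Fin m → ℝ, u ⬝ᵥ Γmin *ᵥ u = 1 → ∃ v ∈ N, g u ≤ g v + S / 2 := by
    intro u hu
    obtain ⟨v, hvN, hnet⟩ := hN.2 u hu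
    have hvshell := hN.1 v hvN
    set A : EuclideanSpace ℝ (Fin n) := toE (Q *ᵥ u) with hA
    set B : EuclideanSpace ℝ (Fin n) := toE (Q *ᵥ v) with hB
    set qE : EuclideanSpace ℝ (Fin n) := toE q with hqE
    have hA1 : 1 ≤ ‖A‖ := by rw [hA, ← enorm_eq_norm]; exact shell_norm u hu
    have hB1 : 1 ≤ ‖B‖ := by rw [hB, ← enorm_eq_norm]; exact shell_norm v hvshell
    have hAB : ‖A - B‖ ≤ 1 / 4 := by
      have hsub : A - B = toE (Q *ᵥ (u - v)) := by
        rw [hA, hB, ← toE_sub, Matrix.mulVec_sub]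
      rw [hsub, ← enorm_eq_norm]
      have h1 : enorm₂ (Q *ᵥ (u - v)) ^ 2 ≤ (u - v) ⬝ᵥ Γmax *ᵥ (u - v) := quad_ub _
      have h2 : enorm₂ (Q *ᵥ (u - v)) = Real.sqrt (enorm₂ (Q *ᵥ (u - v)) ^ 2) := by
        rw [Real.sqrt_sq (enorm_nonneg _)]
      rw [h2]
      exact le_trans (Real.sqrt_le_sqrt h1) hnet
    set D : EuclideanSpace ℝ (Fin n) := ‖A‖⁻¹ • A - ‖B‖⁻¹ • B with hD
    have hDnorm : ‖D‖ ≤ 1 / 2 := lip_aux A B hA1 hB1 hAB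
    have hA0 : (0 : ℝ) < ‖A‖ := lt_of_lt_of_le one_pos hA1
    have hB0 : (0 : ℝ) < ‖B‖ := lt_of_lt_of_le one_pos hB1
    have hgu : g u = (inner ℝ (‖A‖⁻¹ • A) qE : ℝ) := by
      rw [hg]; unfold gfun
      rw [dot_eq_inner, enorm_eq_norm, real_inner_smul_left, ← hA, ← hqE]
      rw [div_eq_inv_mul]
    have hgv : g v = (inner ℝ (‖B‖⁻¹ • B) qE : ℝ) := by
      rw [hg]; unfold gfun
      rw [dot_eq_inner, enorm_eq_norm, real_inner_smul_left, ← hB, ← hqE]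
      rw [div_eq_inv_mul]
    have hdiff : g u - g v = (inner ℝ D qE : ℝ) := by
      rw [hgu, hgv, hD, inner_sub_left]
    set z : Fin m → ℝ := ‖A‖⁻¹ • u - ‖B‖⁻¹ • v with hz
    have hQz : toE (Q *ᵥ z) = D := by
      rw [hz, Matrix.mulVec_sub, Matrix.mulVec_smul, Matrix.mulVec_smul,
        toE_sub, toE_smul, toE_smul, hD, hA, hB]
    refine ⟨v, hvN, ?_⟩
    by_cases hz0 : z = 0
    · have : D = 0 := by rw [← hQz, hz0]; simp [toE]
      rw [this] at hdiff
      simp at hdiff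
      linarith
    · have hQzne : Q *ᵥ z ≠ 0 := hQne z hz0
      have hezQ : 0 < enorm₂ (Q *ᵥ z) := by
        rcases lt_or_eq_of_le (enorm_nonneg (Q *ᵥ z)) with h | h
        · exact h
        · exact absurd ((enorm_eq_zero_iff _).mp h.symm) hQzne
      have hinner : (inner ℝ D qE : ℝ) = enorm₂ (Q *ᵥ z) * g z := by
        rw [← hQz, hqE]
        rw [← dot_eq_inner]
        rw [hg]; unfold gfun
        rw [mul_div_cancel₀ _ (ne_of_gt hezQ)]
      have hgz : g z ≤ S := hS_all z hz0
      have heD : enorm₂ (Q *ᵥ z) = ‖D‖ := by rw [enorm_eq_norm, hQz]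
      have : (inner ℝ D qE : ℝ) ≤ S / 2 := by
        rw [hinner, heD]
        calc ‖D‖ * g z ≤ ‖D‖ * S := mul_le_mul_of_nonneg_left hgz (norm_nonneg _)
          _ ≤ (1 / 2) * S := mul_le_mul_of_nonneg_right hDnorm hS0
          _ = S / 2 := by ring
      linarith [hdiff ▸ this]
  -- rescale the maximizer onto the shell
  have hw0ne : w0 ≠ 0 := by
    intro h
    rw [h, (enorm_eq_zero_iff (0 : Fin m → ℝ)).mpr rfl] at hw0
    · norm_num at hw0
  have hc0 : 0 < w0 ⬝ᵥ Γmin *ᵥ w0 := by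
    have := hmin.dotProduct_mulVec_pos hw0ne; simpa using this
  set c0 : ℝ := w0 ⬝ᵥ Γmin *ᵥ w0 with hc0def
  set s : ℝ := Real.sqrt c0 with hs
  have hs0 : 0 < s := Real.sqrt_pos.mpr hc0
  have hss : s * s = c0 := Real.mul_self_sqrt (le_of_lt hc0)
  set u0 : Fin m → ℝ := s⁻¹ • w0 with hu0
  have hu0shell : u0 ⬝ᵥ Γmin *ᵥ u0 = 1 := by
    rw [hu0, smul_dotProduct, mulVec_smul, dotProduct_smul, smul_eq_mul, smul_eq_mul,
      ← hc0def]
    field_simp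
    rw [mul_comm] at hss
    linarith
  have hgu0 : g u0 = S := by
    rw [hu0, hg, gfun_smul Q q (inv_pos.mpr hs0), ← hg, hgw0]
  obtain ⟨v0, hv0N, hv0⟩ := hkey u0 hu0shell
  rw [hgu0] at hv0
  have hfinal : S ≤ 2 * g v0 := by linarith
  refine ⟨v0, hv0N, ?_⟩
  have hgww : g w ≤ S := hS_ub w hw
  have : g w ≤ 2 * g v0 := le_trans hgww hfinal
  simpa [hg, gfun] using this
end

section
/- Let {F_t}_{t≥0} be a filtration, let {Z_t}_{t≥1} be adapted to F_t, and let {W_t}_{t≥1} be adapted to F_{t+1} with W_t | F_t mean-zero and σ²-sub-Gaussian (i.e., E[exp(λW_t) | F_t] ≤ exp(σ²λ²/2) for all λ). Then for any positive reals α, β: P[{Σ_{t=1}^T Z_t W_t ≥ α} ∩ {Σ_{t=1}^T Z_t² ≤ β}] ≤ exp(−α²/(2σ²β)). -/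
open MeasureTheory

lemma lem1 {Ω : Type*} {m0 : MeasurableSpace Ω} (μ : Measure Ω) [IsProbabilityMeasure μ]
    {m : MeasurableSpace Ω} (hm : m ≤ m0) (Wt : Ω → ℝ) (σ : ℝ)
    (hint : ∀ lam : ℝ, Integrable (fun ω => Real.exp (lam * Wt ω)) μ)
    (hsubG : ∀ lam : ℝ, μ[fun ω => Real.exp (lam * Wt ω)|m] ≤ᵐ[μ]
      fun _ => Real.exp (σ ^ 2 * lam ^ 2 / 2))
    (Fn : Ω → ℝ) (K : ℝ) (hF0 : ∀ ω, 0 ≤ Fn ω) (hFK : ∀ ω, Fn ω ≤ K)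
    (hFm : StronglyMeasurable[m] Fn) (lam : ℝ) :
    ∫ ω, Fn ω * Real.exp (lam * Wt ω) ∂μ ≤
      Real.exp (σ ^ 2 * lam ^ 2 / 2) * ∫ ω, Fn ω ∂μ := by
  have hFnorm : ∀ ω, ‖Fn ω‖ ≤ K := fun ω => by
    rw [Real.norm_of_nonneg (hF0 ω)]; exact hFK ω
  have hFint : Integrable Fn μ :=
    Integrable.mono' (integrable_const K) (hFm.mono hm).aestronglyMeasurable
      (Filter.Eventually.of_forall hFnorm)
  have hfg : Integrable (Fn * fun ω => Real.exp (lam * Wt ω)) μ :=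
    (hint lam).bdd_mul (hFm.mono hm).aestronglyMeasurable (Filter.Eventually.of_forall hFnorm)
  have key := condExp_mul_of_stronglyMeasurable_left hFm hfg (hint lam)
  have h1 : ∫ ω, Fn ω * Real.exp (lam * Wt ω) ∂μ
      = ∫ ω, Fn ω * (μ[fun ω' => Real.exp (lam * Wt ω')|m]) ω ∂μ := by
    have : ∫ ω, (Fn * fun ω' => Real.exp (lam * Wt ω')) ω ∂μ
        = ∫ ω, (Fn * μ[fun ω' => Real.exp (lam * Wt ω')|m]) ω ∂μ := by
      rw [← integral_condExp hm (f := Fn * fun ω => Real.exp (lam * Wt ω)) (μ := μ)]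
      exact integral_congr_ae key
    simpa [Pi.mul_apply] using this
  rw [h1]
  have hcint : Integrable (Fn * μ[fun ω' => Real.exp (lam * Wt ω')|m]) μ :=
    integrable_condExp.congr key
  calc ∫ ω, Fn ω * (μ[fun ω' => Real.exp (lam * Wt ω')|m]) ω ∂μ
      ≤ ∫ ω, Fn ω * Real.exp (σ ^ 2 * lam ^ 2 / 2) ∂μ := by
        refine integral_mono_ae hcint (hFint.mul_const _) ?_
        filter_upwards [hsubG lam] with ω hω
        exact mul_le_mul_of_nonneg_left hω (hF0 ω)
    _ = Real.exp (σ ^ 2 * lam ^ 2 / 2) * ∫ ω, Fn ω ∂μ := by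
        rw [integral_mul_const, mul_comm]

lemma lem2 {Ω : Type*} {m0 : MeasurableSpace Ω} (μ : Measure Ω) [IsProbabilityMeasure μ]
    {m : MeasurableSpace Ω} (hm : m ≤ m0) (Wt : Ω → ℝ) (σ : ℝ)
    (hint : ∀ lam : ℝ, Integrable (fun ω => Real.exp (lam * Wt ω)) μ)
    (hsubG : ∀ lam : ℝ, μ[fun ω => Real.exp (lam * Wt ω)|m] ≤ᵐ[μ]
      fun _ => Real.exp (σ ^ 2 * lam ^ 2 / 2))
    (Fn : Ω → ℝ) (K : ℝ) (hF0 : ∀ ω, 0 ≤ Fn ω) (hFK : ∀ ω, Fn ω ≤ K)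
    (hFm : StronglyMeasurable[m] Fn)
    (g : Ω → ℝ) (hgm : Measurable[m] g) (s : Finset ℝ) (hgs : ∀ ω, g ω ∈ s) :
    ∫ ω, Fn ω * Real.exp (g ω * Wt ω) ∂μ ≤
      ∫ ω, Fn ω * Real.exp (σ ^ 2 * g ω ^ 2 / 2) ∂μ := by
  set K' := max K 0 with hK'
  set A : ℝ → Set Ω := fun c => g ⁻¹' {c} with hA
  have hAm : ∀ c, MeasurableSet[m] (A c) := fun c => hgm (measurableSet_singleton c)
  have hsplit : ∀ (h : ℝ → Ω → ℝ) (ω : Ω),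
      Fn ω * h (g ω) ω = ∑ c ∈ s, (A c).indicator (fun ω' => Fn ω' * h c ω') ω := by
    intro h ω
    rw [Finset.sum_eq_single_of_mem (g ω) (hgs ω)]
    · rw [Set.indicator_of_mem (by simp [hA] : ω ∈ A (g ω))]
    · intro c _ hc
      apply Set.indicator_of_notMem
      exact fun h' => hc (show g ω = c by simpa [hA] using h').symm
  -- the indicatored F's
  have hindF0 : ∀ c ω, 0 ≤ (A c).indicator Fn ω := fun c ω =>
    Set.indicator_apply_nonneg (fun _ => hF0 ω)
  have hindFK : ∀ c ω, (A c).indicator Fn ω ≤ K' := by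
    intro c ω
    by_cases h : ω ∈ A c
    · rw [Set.indicator_of_mem h]; exact (hFK ω).trans (le_max_left _ _)
    · rw [Set.indicator_of_notMem h]; exact le_max_right _ _
  have hindFm : ∀ c, StronglyMeasurable[m] ((A c).indicator Fn) := fun c =>
    hFm.indicator (hAm c)
  have hindint : ∀ c, Integrable ((A c).indicator Fn) μ := fun c =>
    Integrable.mono' (integrable_const K')
      (((hindFm c).mono hm).aestronglyMeasurable)
      (Filter.Eventually.of_forall fun ω => by
        rw [Real.norm_of_nonneg (hindF0 c ω)]; exact hindFK c ω)
  have heq1 : ∀ c ω, (A c).indicator (fun ω' => Fn ω' * Real.exp (c * Wt ω')) ω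
      = (A c).indicator Fn ω * Real.exp (c * Wt ω) := by
    intro c ω
    exact Set.indicator_mul_left _ _ _
  have hint1 : ∀ c, Integrable
      (fun ω => (A c).indicator (fun ω' => Fn ω' * Real.exp (c * Wt ω')) ω) μ := by
    intro c
    refine Integrable.congr ((hint c).bdd_mul
      (((hindFm c).mono hm).aestronglyMeasurable)
      (Filter.Eventually.of_forall fun ω => by rw [Real.norm_of_nonneg (hindF0 c ω)]; exact hindFK c ω)) ?_
    exact Filter.Eventually.of_forall fun ω => (heq1 c ω).symm
  have hint2 : ∀ c, Integrable
      (fun ω => (A c).indicator (fun ω' => Fn ω' * Real.exp (σ ^ 2 * c ^ 2 / 2)) ω) μ := by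
    intro c
    refine Integrable.mono' (integrable_const (K' * Real.exp (σ ^ 2 * c ^ 2 / 2)))
      ?_ (Filter.Eventually.of_forall fun ω => ?_)
    · exact ((((hindFm c).mono hm).aestronglyMeasurable).mul_const
        (Real.exp (σ ^ 2 * c ^ 2 / 2))).congr
        (Filter.Eventually.of_forall fun ω => by
          simpa using
            (Set.indicator_mul_left (A c) Fn
              (fun _ => Real.exp (σ ^ 2 * c ^ 2 / 2)) (i := ω)).symm)
    · by_cases h : ω ∈ A c
      · rw [Set.indicator_of_mem h, Real.norm_of_nonneg
          (mul_nonneg (hF0 ω) (Real.exp_pos _).le)]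
        exact mul_le_mul_of_nonneg_right ((hFK ω).trans (le_max_left _ _))
          (Real.exp_pos _).le
      · rw [Set.indicator_of_notMem h, norm_zero]
        exact mul_nonneg (le_max_right _ _) (Real.exp_pos _).le
  calc ∫ ω, Fn ω * Real.exp (g ω * Wt ω) ∂μ
      = ∑ c ∈ s, ∫ ω, (A c).indicator (fun ω' => Fn ω' * Real.exp (c * Wt ω')) ω ∂μ := by
        rw [← integral_finset_sum s (fun c _ => hint1 c)]
        exact integral_congr_ae (Filter.Eventually.of_forall fun ω =>
          hsplit (fun c ω' => Real.exp (c * Wt ω')) ω)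
    _ ≤ ∑ c ∈ s, ∫ ω, (A c).indicator (fun ω' => Fn ω' * Real.exp (σ ^ 2 * c ^ 2 / 2)) ω ∂μ := by
        refine Finset.sum_le_sum fun c _ => ?_
        have h1 : ∫ ω, (A c).indicator (fun ω' => Fn ω' * Real.exp (c * Wt ω')) ω ∂μ
            = ∫ ω, (A c).indicator Fn ω * Real.exp (c * Wt ω) ∂μ :=
          integral_congr_ae (Filter.Eventually.of_forall fun ω => heq1 c ω)
        have h2 : ∫ ω, (A c).indicator (fun ω' => Fn ω' * Real.exp (σ ^ 2 * c ^ 2 / 2)) ω ∂μ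
            = (∫ ω, (A c).indicator Fn ω ∂μ) * Real.exp (σ ^ 2 * c ^ 2 / 2) := by
          rw [← integral_mul_const]
          exact integral_congr_ae (Filter.Eventually.of_forall fun ω =>
            Set.indicator_mul_left _ _ _)
        rw [h1, h2, mul_comm]
        exact lem1 μ hm Wt σ hint hsubG _ K' (hindF0 c) (hindFK c) (hindFm c) c
    _ = ∫ ω, Fn ω * Real.exp (σ ^ 2 * g ω ^ 2 / 2) ∂μ := by
        rw [← integral_finset_sum s (fun c _ => hint2 c)]
        exact (integral_congr_ae (Filter.Eventually.of_forall fun ω =>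
          hsplit (fun c _ => Real.exp (σ ^ 2 * c ^ 2 / 2)) ω)).symm

lemma lem3 {Ω : Type*} {m0 : MeasurableSpace Ω} (μ : Measure Ω) [IsProbabilityMeasure μ]
    {m : MeasurableSpace Ω} (hm : m ≤ m0) (Wt : Ω → ℝ) (σ : ℝ)
    (hint : ∀ lam : ℝ, Integrable (fun ω => Real.exp (lam * Wt ω)) μ)
    (hsubG : ∀ lam : ℝ, μ[fun ω => Real.exp (lam * Wt ω)|m] ≤ᵐ[μ]
      fun _ => Real.exp (σ ^ 2 * lam ^ 2 / 2))
    (Fn : Ω → ℝ) (K : ℝ) (hF0 : ∀ ω, 0 ≤ Fn ω) (hFK : ∀ ω, Fn ω ≤ K)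
    (hFm : StronglyMeasurable[m] Fn)
    (g : Ω → ℝ) (hgm : Measurable[m] g) (c : ℝ) (hgc : ∀ ω, |g ω| ≤ c)
    (hWm : Measurable[m0] Wt) :
    ∫ ω, Fn ω * Real.exp (g ω * Wt ω) ∂μ ≤
      ∫ ω, Fn ω * Real.exp (σ ^ 2 * g ω ^ 2 / 2) ∂μ := by
  rcases isEmpty_or_nonempty Ω with hΩ | hΩ
  · simp [integral_of_isEmpty]
  have hc0 : 0 ≤ c := (abs_nonneg _).trans (hgc (Classical.arbitrary Ω))
  set K' := max K 0 with hK'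
  have hFK' : ∀ ω, Fn ω ≤ K' := fun ω => (hFK ω).trans (le_max_left _ _)
  -- discretization
  set q : ℕ → Ω → ℝ := fun n ω => (⌊g ω * (n + 1)⌋ : ℝ) / (n + 1) with hq
  have hnpos : ∀ n : ℕ, (0 : ℝ) < n + 1 := fun n => by positivity
  have hqle : ∀ n ω, q n ω ≤ g ω := fun n ω => by
    rw [hq, div_le_iff₀ (hnpos n)]
    exact Int.floor_le _
  have hqgt : ∀ n ω, g ω < q n ω + 1 / (n + 1) := fun n ω => by
    rw [hq]
    simp only []
    rw [← add_div, lt_div_iff₀ (hnpos n)]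
    push_cast
    exact Int.lt_floor_add_one _
  have hqabs : ∀ n ω, |q n ω| ≤ c + 1 := by
    intro n ω
    rw [abs_le]
    constructor
    · calc -(c + 1) ≤ g ω - 1 / (n + 1) := by
            have h1 : (1 : ℝ) / (n + 1) ≤ 1 := by
              rw [div_le_one (hnpos n)]; linarith [Nat.cast_nonneg (α := ℝ) n]
            have := (abs_le.mp (hgc ω)).1
            linarith
        _ ≤ q n ω := by linarith [hqgt n ω]
    · exact (hqle n ω).trans (((abs_le.mp (hgc ω)).2).trans (by linarith))
  have hqtendsto : ∀ ω, Filter.Tendsto (fun n => q n ω) Filter.atTop (nhds (g ω)) := by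
    intro ω
    rw [tendsto_iff_dist_tendsto_zero]
    refine squeeze_zero (fun n => dist_nonneg) (fun n => ?_)
      tendsto_one_div_add_atTop_nhds_zero_nat
    rw [Real.dist_eq, abs_le]
    constructor
    · linarith [hqgt n ω, hnpos n]
    · linarith [hqle n ω, (hnpos n).le, one_div_nonneg.mpr (hnpos n).le]
  have hqm : ∀ n, Measurable[m] (q n) := fun n =>
    (measurable_from_top.comp (Measurable.floor (hgm.mul measurable_const))).div
      measurable_const
  -- finite range
  have hqfin : ∀ (n : ℕ) (ω : Ω), q n ω ∈ (Finset.Icc (-((⌈c⌉ + 1) * (n + 1)))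
      ((⌈c⌉ + 1) * (n + 1)) : Finset ℤ).image (fun k : ℤ => (k : ℝ) / (n + 1)) := by
    intro n ω
    refine Finset.mem_image.mpr ⟨⌊g ω * (n + 1)⌋, ?_, rfl⟩
    rw [Finset.mem_Icc]
    have hMc : c ≤ (⌈c⌉ : ℝ) + 1 := (Int.le_ceil c).trans (by linarith)
    have hgb := abs_le.mp (hgc ω)
    constructor
    · have : (-((⌈c⌉ + 1) * (n + 1)) : ℝ) ≤ ⌊g ω * (n + 1)⌋ := by
        have h1 : -((⌈c⌉ : ℝ) + 1) * (n + 1) ≤ g ω * (n + 1) - 1 := by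
          have hMc1 : c + 1 ≤ (⌈c⌉ : ℝ) + 1 := by linarith [Int.le_ceil c]
          have hn1 : (1 : ℝ) ≤ n + 1 := by linarith [Nat.cast_nonneg (α := ℝ) n]
          have hkey : c * (n + 1) + 1 ≤ ((⌈c⌉ : ℝ) + 1) * (n + 1) := by nlinarith
          have hmul := mul_le_mul_of_nonneg_right hgb.1 (hnpos n).le
          nlinarith
        have h2 : g ω * (n + 1) - 1 ≤ ⌊g ω * (n + 1)⌋ := by
          linarith [Int.lt_floor_add_one (g ω * (n + 1))]
        push_cast
        linarith
      exact_mod_cast this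
    · have : (⌊g ω * (n + 1)⌋ : ℝ) ≤ ((⌈c⌉ + 1) * (n + 1) : ℝ) := by
        have h2 : g ω * (n + 1) ≤ ((⌈c⌉ : ℝ) + 1) * (n + 1) := by
          nlinarith [hnpos n]
        calc (⌊g ω * (n + 1)⌋ : ℝ) ≤ g ω * (n + 1) := Int.floor_le _
          _ ≤ _ := h2
        
      exact_mod_cast this
  have hstep : ∀ n, ∫ ω, Fn ω * Real.exp (q n ω * Wt ω) ∂μ ≤
      ∫ ω, Fn ω * Real.exp (σ ^ 2 * q n ω ^ 2 / 2) ∂μ := fun n =>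
    lem2 μ hm Wt σ hint hsubG Fn K hF0 hFK hFm (q n) (hqm n) _ (hqfin n)
  -- dominated convergence on both sides
  have hFmeas : Measurable[m0] Fn := (hFm.mono hm).measurable
  have hBint : Integrable (fun ω => K' * (Real.exp ((c + 1) * Wt ω)
      + Real.exp (-(c + 1) * Wt ω))) μ := ((hint (c + 1)).add (hint (-(c + 1)))).const_mul K'
  have hexp_bound : ∀ (r : ℝ), |r| ≤ c + 1 → ∀ ω,
      Real.exp (r * Wt ω) ≤ Real.exp ((c + 1) * Wt ω) + Real.exp (-(c + 1) * Wt ω) := by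
    intro r hr ω
    rcases le_total 0 (Wt ω) with hw | hw
    · have h1 : r * Wt ω ≤ (c + 1) * Wt ω :=
        mul_le_mul_of_nonneg_right ((le_abs_self r).trans hr) hw
      exact (Real.exp_le_exp.mpr h1).trans (le_add_of_nonneg_right (Real.exp_pos _).le)
    · have h1 : r * Wt ω ≤ -(c + 1) * Wt ω := by
        nlinarith [neg_abs_le r, hr]
      exact (Real.exp_le_exp.mpr h1).trans (le_add_of_nonneg_left (Real.exp_pos _).le)
  have hdom : ∀ n ω, ‖Fn ω * Real.exp (q n ω * Wt ω)‖ ≤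
      K' * (Real.exp ((c + 1) * Wt ω) + Real.exp (-(c + 1) * Wt ω)) := by
    intro n ω
    rw [Real.norm_of_nonneg (mul_nonneg (hF0 ω) (Real.exp_pos _).le)]
    exact mul_le_mul (hFK' ω) (hexp_bound _ (hqabs n ω) ω) (Real.exp_pos _).le
      ((hF0 ω).trans (hFK' ω))
  have hqm0 : ∀ n, Measurable[m0] (q n) := fun n => (hqm n).mono hm le_rfl
  have hmeas1 : ∀ n, @AEStronglyMeasurable Ω ℝ _ m0 m0 (fun ω => Fn ω * Real.exp (q n ω * Wt ω)) μ := by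
    intro n
    have h1 : Measurable[m0] fun ω => q n ω * Wt ω := (hqm0 n).mul hWm
    exact (hFmeas.mul (Real.measurable_exp.comp h1)).aestronglyMeasurable
  have hlhs : Filter.Tendsto (fun n => ∫ ω, Fn ω * Real.exp (q n ω * Wt ω) ∂μ)
      Filter.atTop (nhds (∫ ω, Fn ω * Real.exp (g ω * Wt ω) ∂μ)) := by
    refine tendsto_integral_of_dominated_convergence _ hmeas1 hBint
      (fun n => Filter.Eventually.of_forall (hdom n))
      (Filter.Eventually.of_forall fun ω => ?_)
    exact Filter.Tendsto.const_mul _ ((Real.continuous_exp.tendsto _).comp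
      (((hqtendsto ω).mul_const _)))
  have hrhs : Filter.Tendsto (fun n => ∫ ω, Fn ω * Real.exp (σ ^ 2 * q n ω ^ 2 / 2) ∂μ)
      Filter.atTop (nhds (∫ ω, Fn ω * Real.exp (σ ^ 2 * g ω ^ 2 / 2) ∂μ)) := by
    refine tendsto_integral_of_dominated_convergence
      (fun ω => K' * Real.exp (σ ^ 2 * (c + 1) ^ 2 / 2))
      (fun n => by
        have h1 : Measurable[m0] fun ω => σ ^ 2 * q n ω ^ 2 / 2 :=
          (((hqm0 n).pow_const 2).const_mul _).div_const 2
        exact (hFmeas.mul (Real.measurable_exp.comp h1)).aestronglyMeasurable)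
      (integrable_const _)
      (fun n => Filter.Eventually.of_forall fun ω => ?_)
      (Filter.Eventually.of_forall fun ω => ?_)
    · rw [Real.norm_of_nonneg (mul_nonneg (hF0 ω) (Real.exp_pos _).le)]
      refine mul_le_mul (hFK' ω) (Real.exp_le_exp.mpr ?_) (Real.exp_pos _).le
        ((hF0 ω).trans (hFK' ω))
      have h1 : q n ω ^ 2 ≤ (c + 1) ^ 2 := by
        have := hqabs n ω
        nlinarith [abs_nonneg (q n ω), sq_abs (q n ω), neg_abs_le (q n ω), le_abs_self (q n ω)]
      have hσ2 : (0 : ℝ) ≤ σ ^ 2 := sq_nonneg σ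
      nlinarith
    · refine Filter.Tendsto.const_mul _ ((Real.continuous_exp.tendsto _).comp ?_)
      exact ((((hqtendsto ω).pow 2).const_mul _).div_const 2)
  exact le_of_tendsto_of_tendsto' hlhs hrhs hstep

lemma lem4 {Ω : Type*} {m0 : MeasurableSpace Ω} (μ : Measure Ω) [IsProbabilityMeasure μ]
    {m : MeasurableSpace Ω} (hm : m ≤ m0) (Wt : Ω → ℝ) (σ : ℝ)
    (hint : ∀ lam : ℝ, Integrable (fun ω => Real.exp (lam * Wt ω)) μ)
    (hsubG : ∀ lam : ℝ, μ[fun ω => Real.exp (lam * Wt ω)|m] ≤ᵐ[μ]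
      fun _ => Real.exp (σ ^ 2 * lam ^ 2 / 2))
    (Fn : Ω → ℝ) (hF0 : ∀ ω, 0 ≤ Fn ω) (hFint : Integrable Fn μ)
    (hFm : StronglyMeasurable[m] Fn)
    (g : Ω → ℝ) (hgm : Measurable[m] g) (c : ℝ) (hgc : ∀ ω, |g ω| ≤ c)
    (hWm : Measurable[m0] Wt) :
    Integrable (fun ω => Fn ω * Real.exp (g ω * Wt ω)) μ ∧
      ∫ ω, Fn ω * Real.exp (g ω * Wt ω) ∂μ ≤
        ∫ ω, Fn ω * Real.exp (σ ^ 2 * g ω ^ 2 / 2) ∂μ := by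
  rcases isEmpty_or_nonempty Ω with hΩ | hΩ
  · constructor
    · exact ⟨(((hFm.mono hm).measurable.mul (Real.measurable_exp.comp
        ((hgm.mono hm le_rfl).mul hWm)))).aestronglyMeasurable, by
        rw [HasFiniteIntegral, μ.eq_zero_of_isEmpty]; simp⟩
    · simp [integral_of_isEmpty]
  have hc0 : 0 ≤ c := (abs_nonneg _).trans (hgc (Classical.arbitrary Ω))
  set FJ : ℕ → Ω → ℝ := fun j ω => min (Fn ω) j with hFJ
  have hFJ0 : ∀ j ω, 0 ≤ FJ j ω := fun j ω => le_min (hF0 ω) (Nat.cast_nonneg j)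
  have hFJle : ∀ j ω, FJ j ω ≤ Fn ω := fun j ω => min_le_left _ _
  have hFJK : ∀ j ω, FJ j ω ≤ (j : ℝ) := fun j ω => min_le_right _ _
  have hFJm : ∀ j, StronglyMeasurable[m] (FJ j) := fun j =>
    (Measurable.min hFm.measurable measurable_const).stronglyMeasurable
  have hFJmono : ∀ ω, Monotone fun j => FJ j ω := fun ω j k hjk =>
    min_le_min le_rfl (Nat.cast_le.mpr hjk)
  have hFJtendsto : ∀ ω, Filter.Tendsto (fun j => FJ j ω) Filter.atTop (nhds (Fn ω)) := by
    intro ω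
    refine tendsto_nhds_of_eventually_eq ?_
    filter_upwards [Filter.eventually_ge_atTop ⌈Fn ω⌉₊] with j hj
    exact min_eq_left ((Nat.le_ceil (Fn ω)).trans (Nat.cast_le.mpr hj))
  -- measurability of the target
  have hgm0 : Measurable[m0] g := hgm.mono hm le_rfl
  have hFmeas : Measurable[m0] Fn := (hFm.mono hm).measurable
  have hmeas : Measurable[m0] (fun ω => Fn ω * Real.exp (g ω * Wt ω)) :=
    hFmeas.mul (Real.measurable_exp.comp (hgm0.mul hWm))
  have hmeasJ : ∀ j, Measurable[m0] (fun ω => FJ j ω * Real.exp (g ω * Wt ω)) := fun j =>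
    ((hFJm j).mono hm).measurable.mul (Real.measurable_exp.comp (hgm0.mul hWm))
  -- each truncation is integrable
  have hintJ : ∀ j, Integrable (fun ω => FJ j ω * Real.exp (g ω * Wt ω)) μ := by
    intro j
    refine Integrable.mono' (((hint c).add (hint (-c))).const_mul j)
      (hmeasJ j).aestronglyMeasurable (Filter.Eventually.of_forall fun ω => ?_)
    rw [Real.norm_of_nonneg (mul_nonneg (hFJ0 j ω) (Real.exp_pos _).le)]
    have hexp : Real.exp (g ω * Wt ω) ≤ Real.exp (c * Wt ω) + Real.exp (-c * Wt ω) := by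
      rcases le_total 0 (Wt ω) with hw | hw
      · have h1 : g ω * Wt ω ≤ c * Wt ω :=
          mul_le_mul_of_nonneg_right ((le_abs_self _).trans (hgc ω)) hw
        exact (Real.exp_le_exp.mpr h1).trans (le_add_of_nonneg_right (Real.exp_pos _).le)
      · have h1 : g ω * Wt ω ≤ -c * Wt ω := by
          nlinarith [neg_abs_le (g ω), hgc ω]
        exact (Real.exp_le_exp.mpr h1).trans (le_add_of_nonneg_left (Real.exp_pos _).le)
    calc FJ j ω * Real.exp (g ω * Wt ω) ≤ (j : ℝ) * Real.exp (g ω * Wt ω) :=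
          mul_le_mul_of_nonneg_right (hFJK j ω) (Real.exp_pos _).le
      _ ≤ (j : ℝ) * (Real.exp (c * Wt ω) + Real.exp (-c * Wt ω)) :=
          mul_le_mul_of_nonneg_left hexp (Nat.cast_nonneg j)
  -- RHS integrable
  have hrhs_int : Integrable (fun ω => Fn ω * Real.exp (σ ^ 2 * g ω ^ 2 / 2)) μ := by
    have := hFint.bdd_mul (c := Real.exp (σ ^ 2 * c ^ 2 / 2))
      (f := fun ω => Real.exp (σ ^ 2 * g ω ^ 2 / 2))
      (Real.measurable_exp.comp ((((hgm0.pow_const 2).const_mul _).div_const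
        2))).aestronglyMeasurable
      (Filter.Eventually.of_forall fun ω => by
        rw [Real.norm_of_nonneg (Real.exp_pos _).le]
        apply Real.exp_le_exp.mpr
        have h1 : g ω ^ 2 ≤ c ^ 2 := by
          nlinarith [hgc ω, sq_abs (g ω), abs_nonneg (g ω), hc0]
        have h2 := mul_le_mul_of_nonneg_left h1 (sq_nonneg σ)
        linarith)
    refine this.congr (Filter.Eventually.of_forall fun ω => ?_)
    simp [mul_comm]
  -- uniform bound on truncated integrals
  have hboundJ : ∀ j, ∫ ω, FJ j ω * Real.exp (g ω * Wt ω) ∂μ ≤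
      ∫ ω, Fn ω * Real.exp (σ ^ 2 * g ω ^ 2 / 2) ∂μ := by
    intro j
    calc ∫ ω, FJ j ω * Real.exp (g ω * Wt ω) ∂μ
        ≤ ∫ ω, FJ j ω * Real.exp (σ ^ 2 * g ω ^ 2 / 2) ∂μ :=
          lem3 μ hm Wt σ hint hsubG (FJ j) j (hFJ0 j) (hFJK j) (hFJm j) g hgm c hgc hWm
      _ ≤ ∫ ω, Fn ω * Real.exp (σ ^ 2 * g ω ^ 2 / 2) ∂μ := by
          refine integral_mono_ae ?_ hrhs_int (Filter.Eventually.of_forall fun ω =>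
            mul_le_mul_of_nonneg_right (hFJle j ω) (Real.exp_pos _).le)
          refine Integrable.mono' hrhs_int (((hFJm j).mono hm).measurable.mul
            (Real.measurable_exp.comp ((((hgm0.pow_const 2).const_mul _).div_const
              2)))).aestronglyMeasurable (Filter.Eventually.of_forall fun ω => ?_)
          rw [Real.norm_of_nonneg (mul_nonneg (hFJ0 j ω) (Real.exp_pos _).le)]
          exact mul_le_mul_of_nonneg_right (hFJle j ω) (Real.exp_pos _).le
  -- integrability via monotone convergence (lintegral)
  have hB0 : 0 ≤ ∫ ω, Fn ω * Real.exp (σ ^ 2 * g ω ^ 2 / 2) ∂μ :=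
    integral_nonneg fun ω => mul_nonneg (hF0 ω) (Real.exp_pos _).le
  have hintF : Integrable (fun ω => Fn ω * Real.exp (g ω * Wt ω)) μ := by
    refine ⟨hmeas.aestronglyMeasurable, ?_⟩
    rw [hasFiniteIntegral_iff_ofReal (Filter.Eventually.of_forall fun ω =>
      mul_nonneg (hF0 ω) (Real.exp_pos _).le)]
    have hlim : Filter.Tendsto
        (fun j => ∫⁻ ω, ENNReal.ofReal (FJ j ω * Real.exp (g ω * Wt ω)) ∂μ)
        Filter.atTop (nhds (∫⁻ ω, ENNReal.ofReal (Fn ω * Real.exp (g ω * Wt ω)) ∂μ)) := by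
      refine lintegral_tendsto_of_tendsto_of_monotone
        (fun j => (ENNReal.measurable_ofReal.comp (hmeasJ j)).aemeasurable)
        (Filter.Eventually.of_forall fun ω j k hjk => ENNReal.ofReal_le_ofReal
          (mul_le_mul_of_nonneg_right (hFJmono ω hjk) (Real.exp_pos _).le))
        (Filter.Eventually.of_forall fun ω =>
          (ENNReal.continuous_ofReal.tendsto _).comp
            ((hFJtendsto ω).mul_const _))
    have hle : ∀ j, ∫⁻ ω, ENNReal.ofReal (FJ j ω * Real.exp (g ω * Wt ω)) ∂μ ≤
        ENNReal.ofReal (∫ ω, Fn ω * Real.exp (σ ^ 2 * g ω ^ 2 / 2) ∂μ) := by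
      intro j
      rw [← ofReal_integral_eq_lintegral_ofReal (hintJ j)
        (Filter.Eventually.of_forall fun ω => mul_nonneg (hFJ0 j ω) (Real.exp_pos _).le)]
      exact ENNReal.ofReal_le_ofReal (hboundJ j)
    have := le_of_tendsto' hlim hle
    exact lt_of_le_of_lt this ENNReal.ofReal_lt_top
  refine ⟨hintF, ?_⟩
  -- final inequality via monotone convergence (Bochner)
  have hlim2 : Filter.Tendsto (fun j => ∫ ω, FJ j ω * Real.exp (g ω * Wt ω) ∂μ)
      Filter.atTop (nhds (∫ ω, Fn ω * Real.exp (g ω * Wt ω) ∂μ)) := by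
    refine integral_tendsto_of_tendsto_of_monotone hintJ hintF
      (Filter.Eventually.of_forall fun ω j k hjk =>
        mul_le_mul_of_nonneg_right (hFJmono ω hjk) (Real.exp_pos _).le)
      (Filter.Eventually.of_forall fun ω => (hFJtendsto ω).mul_const _)
  exact le_of_tendsto' hlim2 hboundJ

theorem stmt_13 {Ω : Type*} {m0 : MeasurableSpace Ω} (μ : Measure Ω)
    [IsProbabilityMeasure μ] (F : Filtration ℕ m0)
    (Z W : ℕ → Ω → ℝ)
    (hZ : Adapted F Z)
    (hW : ∀ t, StronglyMeasurable[F (t + 1)] (W t))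
    (σ : ℝ) (hσ : 0 < σ)
    (hint : ∀ t (lam : ℝ), Integrable (fun ω => Real.exp (lam * W t ω)) μ)
    (hmean : ∀ t, μ[W t|F t] =ᵐ[μ] 0)
    (hsubG : ∀ t (lam : ℝ),
      μ[fun ω => Real.exp (lam * W t ω)|F t] ≤ᵐ[μ]
        fun _ => Real.exp (σ ^ 2 * lam ^ 2 / 2))
    (T : ℕ) (α β : ℝ) (hα : 0 < α) (hβ : 0 < β) :
    (μ ({ω | α ≤ ∑ t ∈ Finset.Icc 1 T, Z t ω * W t ω} ∩
        {ω | ∑ t ∈ Finset.Icc 1 T, (Z t ω) ^ 2 ≤ β})).toReal ≤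
      Real.exp (-α ^ 2 / (2 * σ ^ 2 * β)) := by
  set C := Real.sqrt β with hCdef
  have hC0 : 0 ≤ C := Real.sqrt_nonneg β
  have hσ2β : 0 < σ ^ 2 * β := by positivity
  set lam := α / (σ ^ 2 * β) with hlamdef
  have hlam0 : 0 < lam := div_pos hα hσ2β
  set Z' : ℕ → Ω → ℝ := fun t ω => max (-C) (min C (Z t ω)) with hZ'def
  have hZ'm : ∀ t, Measurable[F t] (Z' t) := fun t =>
    measurable_const.max (measurable_const.min (hZ t))
  have hZ'abs : ∀ t ω, |Z' t ω| ≤ C := by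
    intro t ω
    rw [abs_le]
    exact ⟨le_max_left _ _, max_le (by linarith) (min_le_left _ _)⟩
  set f : ℕ → Ω → ℝ := fun n ω => Real.exp (∑ t ∈ Finset.Icc 1 n,
    (lam * Z' t ω * W t ω - lam ^ 2 * σ ^ 2 * Z' t ω ^ 2 / 2)) with hfdef
  have hf0 : ∀ n ω, 0 < f n ω := fun n ω => Real.exp_pos _
  have hWmeas : ∀ t, Measurable[m0] (W t) := fun t =>
    ((hW t).mono (F.le (t + 1))).measurable
  have hfm : ∀ n, StronglyMeasurable[F (n + 1)] (f n) := by
    intro n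
    refine Measurable.stronglyMeasurable ?_
    refine Real.measurable_exp.comp (Finset.measurable_sum _ fun t ht => ?_)
    have ht' := Finset.mem_Icc.mp ht
    have hZt : Measurable[F (n + 1)] (Z' t) :=
      (hZ'm t).mono (F.mono (ht'.2.trans (Nat.le_succ n))) le_rfl
    have hWt : Measurable[F (n + 1)] (W t) :=
      ((hW t).mono (F.mono (Nat.succ_le_succ ht'.2))).measurable
    exact ((hZt.const_mul lam).mul hWt).sub
      ((((hZt.pow_const 2).const_mul _)).div_const 2)
  have claim : ∀ n, Integrable (f n) μ ∧ ∫ ω, f n ω ∂μ ≤ 1 := by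
    intro n
    induction n with
    | zero =>
      constructor
      · refine (integrable_const 1).congr (Filter.Eventually.of_forall fun ω => ?_)
        simp [hfdef]
      · have : ∫ ω, f 0 ω ∂μ = ∫ _ω, (1 : ℝ) ∂μ :=
          integral_congr_ae (Filter.Eventually.of_forall fun ω => by simp [hfdef])
        rw [this]
        simp
    | succ n ih =>
      obtain ⟨hI, hle⟩ := ih
      set g : Ω → ℝ := fun ω => lam * Z' (n + 1) ω with hgdef
      set Fn' : Ω → ℝ := fun ω =>
        f n ω * Real.exp (-(lam ^ 2 * σ ^ 2 * Z' (n + 1) ω ^ 2 / 2)) with hFn'def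
      have hgm : Measurable[F (n + 1)] g := (hZ'm (n + 1)).const_mul lam
      have hgc : ∀ ω, |g ω| ≤ lam * C := by
        intro ω
        rw [hgdef]
        simp only []
        rw [abs_mul, abs_of_pos hlam0]
        exact mul_le_mul_of_nonneg_left (hZ'abs (n + 1) ω) hlam0.le
      have hFn'0 : ∀ ω, 0 ≤ Fn' ω := fun ω =>
        mul_nonneg (hf0 n ω).le (Real.exp_pos _).le
      have hFn'int : Integrable Fn' μ := by
        refine (hI.bdd_mul (c := 1)
          (f := fun ω => Real.exp (-(lam ^ 2 * σ ^ 2 * Z' (n + 1) ω ^ 2 / 2))) ?_ ?_).congr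
          (Filter.Eventually.of_forall fun ω => mul_comm _ _)
        · refine (Real.measurable_exp.comp ?_).aestronglyMeasurable
          exact (((((hZ'm (n + 1)).mono (F.le (n + 1)) le_rfl).pow_const
            2).const_mul _).div_const 2).neg
        · refine Filter.Eventually.of_forall fun ω => ?_
          rw [Real.norm_of_nonneg (Real.exp_pos _).le, Real.exp_le_one_iff, neg_nonpos]
          positivity
      have hFn'm : StronglyMeasurable[F (n + 1)] Fn' := by
        refine Measurable.stronglyMeasurable ?_
        exact (hfm n).measurable.mul (Real.measurable_exp.comp
          (((((hZ'm (n + 1)).pow_const 2).const_mul _).div_const 2).neg))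
      obtain ⟨hint', hle'⟩ := lem4 μ (F.le (n + 1)) (W (n + 1)) σ (hint (n + 1))
        (hsubG (n + 1)) Fn' hFn'0 hFn'int hFn'm g hgm (lam * C) hgc (hWmeas (n + 1))
      have hidA : ∀ ω, Fn' ω * Real.exp (g ω * W (n + 1) ω) = f (n + 1) ω := by
        intro ω
        rw [hfdef]
        simp only []
        rw [Finset.sum_Icc_succ_top (by omega : 1 ≤ n + 1), Real.exp_add,
          show lam * Z' (n + 1) ω * W (n + 1) ω
              - lam ^ 2 * σ ^ 2 * Z' (n + 1) ω ^ 2 / 2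
            = -(lam ^ 2 * σ ^ 2 * Z' (n + 1) ω ^ 2 / 2)
              + lam * Z' (n + 1) ω * W (n + 1) ω from by ring, Real.exp_add]
        rw [hFn'def, hgdef]
        ring
      have hidB : ∀ ω, Fn' ω * Real.exp (σ ^ 2 * g ω ^ 2 / 2) = f n ω := by
        intro ω
        rw [hFn'def, hgdef]
        simp only []
        rw [mul_assoc, ← Real.exp_add,
          show -(lam ^ 2 * σ ^ 2 * Z' (n + 1) ω ^ 2 / 2)
              + σ ^ 2 * (lam * Z' (n + 1) ω) ^ 2 / 2 = 0 from by ring,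
          Real.exp_zero, mul_one]
      constructor
      · exact hint'.congr (Filter.Eventually.of_forall hidA)
      · calc ∫ ω, f (n + 1) ω ∂μ
            = ∫ ω, Fn' ω * Real.exp (g ω * W (n + 1) ω) ∂μ :=
              (integral_congr_ae (Filter.Eventually.of_forall hidA)).symm
          _ ≤ ∫ ω, Fn' ω * Real.exp (σ ^ 2 * g ω ^ 2 / 2) ∂μ := hle'
          _ = ∫ ω, f n ω ∂μ := integral_congr_ae (Filter.Eventually.of_forall hidB)
          _ ≤ 1 := hle
  obtain ⟨hfint, hfle⟩ := claim T
  set S : Ω → ℝ := fun ω => ∑ t ∈ Finset.Icc 1 T, Z t ω * W t ω with hSdef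
  set V : Ω → ℝ := fun ω => ∑ t ∈ Finset.Icc 1 T, Z t ω ^ 2 with hVdef
  have hSm : Measurable S := Finset.measurable_sum _ fun t _ =>
    ((hZ t).mono (F.le t) le_rfl).mul (hWmeas t)
  have hVm : Measurable V := Finset.measurable_sum _ fun t _ =>
    ((hZ t).mono (F.le t) le_rfl).pow_const 2
  set E : Set Ω := {ω | α ≤ S ω} ∩ {ω | V ω ≤ β} with hEdef
  have hEm : MeasurableSet E :=
    (measurableSet_le measurable_const hSm).inter (measurableSet_le hVm measurable_const)
  set a : ℝ := α ^ 2 / (2 * σ ^ 2 * β) with hadef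
  have hfE : ∀ ω ∈ E, Real.exp a ≤ f T ω := by
    intro ω hω
    obtain ⟨h1, h2⟩ := hω
    have hZeq : ∀ t ∈ Finset.Icc 1 T, Z' t ω = Z t ω := by
      intro t ht
      have hsq : Z t ω ^ 2 ≤ β :=
        (Finset.single_le_sum (fun i _ => sq_nonneg (Z i ω)) ht).trans h2
      have habs : |Z t ω| ≤ C := by
        rw [← Real.sqrt_sq_eq_abs, hCdef]
        exact Real.sqrt_le_sqrt hsq
      have h3 := abs_le.mp habs
      rw [hZ'def]
      simp only []
      rw [min_eq_right h3.2, max_eq_right h3.1]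
    have hsum : ∑ t ∈ Finset.Icc 1 T,
        (lam * Z' t ω * W t ω - lam ^ 2 * σ ^ 2 * Z' t ω ^ 2 / 2)
        = lam * S ω - lam ^ 2 * σ ^ 2 / 2 * V ω := by
      rw [hSdef, hVdef]
      simp only []
      rw [Finset.mul_sum, Finset.mul_sum, ← Finset.sum_sub_distrib]
      refine Finset.sum_congr rfl fun t ht => ?_
      rw [hZeq t ht]
      ring
    rw [hfdef]
    simp only []
    rw [hsum]
    apply Real.exp_le_exp.mpr
    have hm1 : lam * α ≤ lam * S ω := mul_le_mul_of_nonneg_left h1 hlam0.le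
    have hm2 : lam ^ 2 * σ ^ 2 / 2 * V ω ≤ lam ^ 2 * σ ^ 2 / 2 * β :=
      mul_le_mul_of_nonneg_left h2 (by positivity)
    have hval : lam * α - lam ^ 2 * σ ^ 2 / 2 * β = a := by
      rw [hadef, hlamdef]
      field_simp
      ring
    linarith
  have hmarkov : (μ E).toReal * Real.exp a ≤ 1 := by
    have hc1 : (μ E).toReal * Real.exp a = ∫ _ω in E, Real.exp a ∂μ := by
      rw [setIntegral_const, smul_eq_mul]
      rfl
    calc (μ E).toReal * Real.exp a = ∫ _ω in E, Real.exp a ∂μ := hc1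
      _ ≤ ∫ ω in E, f T ω ∂μ := by
          refine setIntegral_mono_on (integrableOn_const (measure_ne_top μ E))
            hfint.integrableOn hEm hfE
      _ ≤ ∫ ω, f T ω ∂μ :=
          setIntegral_le_integral hfint (Filter.Eventually.of_forall fun ω => (hf0 T ω).le)
      _ ≤ 1 := hfle
  have hgoal : (μ E).toReal ≤ Real.exp (-a) := by
    rw [Real.exp_neg, ← one_div, le_div_iff₀ (Real.exp_pos _)]
    exact hmarkov
  calc (μ E).toReal ≤ Real.exp (-a) := hgoal
    _ = Real.exp (-α ^ 2 / (2 * σ ^ 2 * β)) := by rw [hadef, neg_div]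
end

section
/- Let (Z_t)_{t≥1} be a real-valued process adapted to a filtration {F_t} satisfying the (k, ν, p)-block martingale small-ball condition: for every j ≥ 0, (1/k)Σ_{i=1}^k P(|Z_{j+i}| ≥ ν | F_j) ≥ p almost surely. Then P[Σ_{t=1}^T Z_t² ≤ (ν²p²/8)·k·⌊T/k⌋] ≤ exp(−⌊T/k⌋ p²/8). -/
open MeasureTheory


private lemma log3_le : Real.log 3 ≤ 179/162 := by
  rw [Real.log_le_iff_le_exp (by norm_num)]
  have h1 : (2.7182818283 : ℝ) < Real.exp 1 := Real.exp_one_gt_d9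
  have h2 : (17/162 : ℝ) + 1 ≤ Real.exp (17/162) := Real.add_one_le_exp _
  have h3 : (179/162 : ℝ) = 1 + 17/162 := by norm_num
  rw [h3, Real.exp_add]
  nlinarith [Real.exp_pos (1:ℝ), Real.exp_pos (17/162 : ℝ)]

private lemma log_one_sub_le_cubic {x : ℝ} (hx0 : 0 ≤ x) (hx1 : x ≤ 1/3) :
    Real.log (1 - x) ≤ -x - x^2/2 - x^3/3 := by
  set g : ℝ → ℝ := fun y => Real.log (1 - y) + (y + y^2/2 + y^3/3) with hg
  have hder : ∀ y ∈ Set.Ioo (0:ℝ) (1/2), HasDerivAt g (-(1-y)⁻¹ + (1 + y + y^2)) y := by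
    intro y hy
    have h1y : (1:ℝ) - y ≠ 0 := by simp only [Set.mem_Ioo] at hy; intro h; nlinarith [hy.1, hy.2]
    have hlog : HasDerivAt (fun y : ℝ => Real.log (1 - y)) ((1-y)⁻¹ * (-1)) y := by
      have hsub : HasDerivAt (fun y : ℝ => 1 - y) (-1) y := by
        simpa using (hasDerivAt_id y).const_sub (1:ℝ)
      exact (Real.hasDerivAt_log h1y).comp y hsub
    have hpoly : HasDerivAt (fun y : ℝ => y + y^2/2 + y^3/3) (1 + y + y^2) y := by
      have := (((hasDerivAt_id y).add (((hasDerivAt_pow 2 y)).div_const 2)).add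
        (((hasDerivAt_pow 3 y)).div_const 3))
      refine this.congr_deriv ?_
      ring
    have := hlog.add hpoly
    refine this.congr_deriv ?_
    ring
  have hanti : AntitoneOn g (Set.Icc (0:ℝ) (1/3)) := by
    apply antitoneOn_of_hasDerivWithinAt_nonpos (convex_Icc _ _)
      (f' := fun y => -(1-y)⁻¹ + (1 + y + y^2))
    · intro y hy
      have h1y : (1:ℝ) - y ≠ 0 := by
        simp only [Set.mem_Icc] at hy; intro h; nlinarith [hy.1, hy.2]
      apply ContinuousWithinAt.add
      · exact ((Real.continuousAt_log h1y).comp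
          ((continuous_const.sub continuous_id).continuousAt)).continuousWithinAt
      · exact (by continuity : Continuous fun y:ℝ => y + y^2/2 + y^3/3).continuousWithinAt
    · intro y hy
      rw [interior_Icc] at hy
      have hy' : y ∈ Set.Ioo (0:ℝ) (1/2) := ⟨hy.1, by linarith [hy.2]⟩
      exact ((hder y hy').hasDerivWithinAt)
    · intro y hy
      rw [interior_Icc] at hy
      have h0 : (0:ℝ) < 1 - y := by linarith [hy.2]
      have : (1 + y + y^2) * (1 - y) = 1 - y^3 := by ring
      have h2 : (1 + y + y^2) ≤ (1-y)⁻¹ := by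
        rw [inv_eq_one_div, le_div_iff₀ h0]
        nlinarith [pow_nonneg (le_of_lt hy.1) 3]
      linarith
  have h1 := hanti (Set.left_mem_Icc.2 (by norm_num)) (Set.mem_Icc.2 ⟨hx0, hx1⟩) hx0
  simp only [hg] at h1
  simp only [Real.log_one, sub_zero] at h1
  norm_num at h1
  linarith

private lemma one_sub_third_le_exp {p : ℝ} (hp0 : 0 ≤ p) (hp1 : p ≤ 1) :
    1 - p/3 ≤ Real.exp (-(p^2/8) - p * Real.log 3 / 4) := by
  have h0 : (0:ℝ) < 1 - p/3 := by linarith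
  rw [← Real.exp_log h0, Real.exp_le_exp]
  have hc := log_one_sub_le_cubic (x := p/3) (by linarith) (by linarith)
  have hL := log3_le
  have hL0 : 0 ≤ Real.log 3 := Real.log_nonneg (by norm_num)
  have key : 0 ≤ p * (1-p) * (37 - 8*p) := by
    apply mul_nonneg (mul_nonneg hp0 (by linarith)) (by linarith)
  nlinarith [mul_le_mul_of_nonneg_left hL hp0]



private lemma sum_blocks (f : ℕ → ℝ) (n k : ℕ) :
    ∑ t ∈ Finset.Icc 1 (n*k), f t
      = ∑ j ∈ Finset.range n, ∑ i ∈ Finset.Icc 1 k, f (j*k + i) := by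
  induction n with
  | zero => simp
  | succ n ih =>
    rw [Finset.sum_range_succ, ← ih]
    have h1 : ∀ m : ℕ, Finset.Icc 1 m = Finset.Ioc 0 m := by
      intro m; rw [← Finset.Icc_add_one_left_eq_Ioc]; rfl
    have h2 : (n+1)*k = n*k + k := by ring
    rw [h1, h1, h1, h2, ← Finset.sum_Ioc_consecutive f (Nat.zero_le (n*k)) (Nat.le_add_right _ _)]
    congr 1
    have h3 : Finset.Ioc (n*k) (n*k + k) = Finset.map (addLeftEmbedding (n*k)) (Finset.Ioc 0 k) := by
      rw [Finset.map_add_left_Ioc]; simp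
    rw [h3, Finset.sum_map]
    rfl

private lemma condexp_block_lb {Ω : Type*} {m : MeasurableSpace Ω} {m0 : MeasurableSpace Ω}
    (hm : m ≤ m0) (μ : Measure Ω) [IsProbabilityMeasure μ]
    (W : ℕ → Ω → ℝ) (hW : ∀ i, Measurable[m0] (W i))
    (k : ℕ) (hk : 0 < k) (ν p : ℝ) (hν : 0 < ν) (hp0 : 0 < p)
    (h : ∀ᵐ ω ∂μ, p ≤ (1 / (k : ℝ)) * ∑ i ∈ Finset.Icc 1 k,
        (μ[Set.indicator {ω' | ν ≤ |W i ω'|} (fun _ => (1 : ℝ))|m]) ω) :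
    ∀ᵐ ω ∂μ, p/2 ≤ (μ[Set.indicator
        {ω' | ν^2 * p * k / 2 ≤ ∑ i ∈ Finset.Icc 1 k, (W i ω')^2}
        (fun _ => (1:ℝ))|m]) ω := by
  set M : Set Ω := {ω' | ν^2 * p * k / 2 ≤ ∑ i ∈ Finset.Icc 1 k, (W i ω')^2} with hM
  have hMmeas : MeasurableSet M := by
    apply measurableSet_le measurable_const
    exact Finset.measurable_sum _ (fun i _ => ((hW i).pow_const 2))
  have hImeas : ∀ i, MeasurableSet {ω' | ν ≤ |W i ω'|} := by
    intro i
    exact measurableSet_le measurable_const (hW i).abs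
  -- indicator functions
  set ind : ℕ → Ω → ℝ := fun i => Set.indicator {ω' | ν ≤ |W i ω'|} (fun _ => (1:ℝ)) with hind
  have hindint : ∀ i, Integrable (ind i) μ := by
    intro i
    exact (integrable_const (1:ℝ)).indicator (hImeas i)
  have hBint : Integrable (Set.indicator M (fun _ => (1:ℝ))) μ :=
    (integrable_const (1:ℝ)).indicator hMmeas
  -- conditional expectation of the sum
  have efun : (fun ω => ∑ i ∈ Finset.Icc 1 k, ind i ω) = ∑ i ∈ Finset.Icc 1 k, ind i := by
    funext ω; simp
  have hsum : μ[fun ω => ∑ i ∈ Finset.Icc 1 k, ind i ω|m]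
      =ᵐ[μ] fun ω => ∑ i ∈ Finset.Icc 1 k, (μ[ind i|m]) ω := by
    rw [efun]
    have := condExp_finsetSum (μ := μ) (m := m) (s := Finset.Icc 1 k) (f := ind)
      (fun i _ => hindint i)
    filter_upwards [this] with ω hω
    · rw [hω]; simp
  -- pointwise domination
  have hpt : ∀ ω, ∑ i ∈ Finset.Icc 1 k, ind i ω
      ≤ p * k / 2 + k * Set.indicator M (fun _ => (1:ℝ)) ω := by
    intro ω
    by_cases hmem : ω ∈ M
    · have h1 : ∑ i ∈ Finset.Icc 1 k, ind i ω ≤ ∑ i ∈ Finset.Icc 1 k, (1:ℝ) := by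
        apply Finset.sum_le_sum
        intro i _
        exact Set.indicator_le_self' (by intro _ _; norm_num) ω
      simp only [Set.indicator_of_mem hmem] at *
      simp only [Finset.sum_const, Nat.card_Icc, nsmul_eq_mul, mul_one, Nat.add_sub_cancel] at h1
      have : (0:ℝ) ≤ p * k / 2 := by positivity
      nlinarith
    · simp only [Set.indicator_of_notMem hmem, mul_zero, add_zero]
      have h2 : ν^2 * ∑ i ∈ Finset.Icc 1 k, ind i ω ≤ ∑ i ∈ Finset.Icc 1 k, (W i ω)^2 := by
        rw [Finset.mul_sum]
        apply Finset.sum_le_sum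
        intro i _
        by_cases hi : ω ∈ {ω' | ν ≤ |W i ω'|}
        · simp only [hind, Set.indicator_of_mem hi, mul_one]
          have : ν ≤ |W i ω| := hi
          nlinarith [abs_nonneg (W i ω), sq_abs (W i ω)]
        · simp only [hind, Set.indicator_of_notMem hi, mul_zero]
          positivity
      have h3 : ¬ (ν^2 * p * k / 2 ≤ ∑ i ∈ Finset.Icc 1 k, (W i ω)^2) := hmem
      push_neg at h3
      nlinarith [sq_nonneg ν, hν]
  -- conditional expectation of the RHS
  set rhs : Ω → ℝ := fun ω => p * k / 2 + k * Set.indicator M (fun _ => (1:ℝ)) ω with hrhs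
  have hrhsint : Integrable rhs μ := by
    apply Integrable.add (integrable_const _)
    exact hBint.const_mul _
  have hcrhs : μ[rhs|m] =ᵐ[μ] fun ω => p * k / 2
      + k * (μ[Set.indicator M (fun _ => (1:ℝ))|m]) ω := by
    have h1 : rhs = (fun _ => p * k / 2) + (k:ℝ) • Set.indicator M (fun _ => (1:ℝ)) := by
      funext ω; simp [hrhs, smul_eq_mul]
    rw [h1]
    have h2 := condExp_add (μ := μ) (m := m) (integrable_const (p * k / 2))
      (hBint.smul (k:ℝ))
    have h3 := condExp_smul (μ := μ) (m := m) (k:ℝ) (Set.indicator M (fun _ => (1:ℝ)))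
    have h4 := condExp_const hm (p * k / 2) (μ := μ)
    filter_upwards [h2, h3] with ω h2 h3
    have h4' := congrFun h4 ω
    simp only [Pi.add_apply, Pi.smul_apply, smul_eq_mul] at *
    rw [h2, h3, h4']
  have hmono := condExp_mono (μ := μ) (m := m)
    (f := fun ω => ∑ i ∈ Finset.Icc 1 k, ind i ω) (g := rhs)
    (integrable_finset_sum _ (fun i _ => hindint i)) hrhsint
    (Filter.Eventually.of_forall hpt)
  filter_upwards [h, hsum, hmono, hcrhs] with ω h h1 h2 h3
  have hk' : (0:ℝ) < k := by exact_mod_cast hk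
  rw [← h1] at h
  rw [h3] at h2
  rw [one_div, inv_mul_eq_div, le_div_iff₀ hk'] at h
  nlinarith [h, h2]

theorem stmt_15 {Ω : Type*} {m0 : MeasurableSpace Ω} (μ : Measure Ω)
    [IsProbabilityMeasure μ] (F : Filtration ℕ m0)
    (Z : ℕ → Ω → ℝ) (hZ : StronglyAdapted F Z)
    (k : ℕ) (hk : 0 < k) (ν p : ℝ) (hν : 0 < ν) (hp0 : 0 < p) (hp1 : p ≤ 1)
    (hbmsb : ∀ j : ℕ, ∀ᵐ ω ∂μ,
      p ≤ (1 / (k : ℝ)) * ∑ i ∈ Finset.Icc 1 k,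
        (μ[Set.indicator {ω' | ν ≤ |Z (j + i) ω'|} (fun _ => (1 : ℝ))|F j]) ω)
    (T : ℕ) :
    (μ {ω | ∑ t ∈ Finset.Icc 1 T, (Z t ω) ^ 2 ≤
        ν ^ 2 * p ^ 2 / 8 * (k * (T / k : ℕ))}).toReal ≤
      Real.exp (-((T / k : ℕ) : ℝ) * p ^ 2 / 8) := by
  set n := T / k with hn
  set L := Real.log 3 with hLdef
  have hL0 : 0 ≤ L := Real.log_nonneg (by norm_num)
  set S : ℕ → Ω → ℝ := fun j ω => ∑ i ∈ Finset.Icc 1 k, (Z (j*k + i) ω)^2 with hSdef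
  set A : ℕ → Set Ω := fun j => {ω' | ν^2 * p * (k:ℝ) / 2 ≤ S j ω'} with hAdef
  set B : ℕ → Ω → ℝ := fun j => (A j).indicator (fun _ => (1:ℝ)) with hBdef
  set X : ℕ → Ω → ℝ := fun j ω => Real.exp (-L * B j ω) with hXdef
  have hZm : ∀ t, Measurable[m0] (Z t) := fun t => ((hZ t).mono (F.le t)).measurable
  have hB01 : ∀ j ω, 0 ≤ B j ω ∧ B j ω ≤ 1 := by
    intro j ω
    constructor
    · exact Set.indicator_nonneg (fun _ _ => zero_le_one) ω
    · exact Set.indicator_le_self' (fun _ _ => zero_le_one) ω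
  -- strong measurability of S j w.r.t. F ((j+1)*k)
  have hSm : ∀ j, StronglyMeasurable[F ((j+1)*k)] (S j) := by
    intro j
    apply Finset.stronglyMeasurable_fun_sum
    intro i hi
    have hle : j*k + i ≤ (j+1)*k := by
      have : i ≤ k := (Finset.mem_Icc.1 hi).2
      nlinarith [this]
    exact ((hZ (j*k + i)).mono (F.mono hle)).pow 2
  have hAm : ∀ j, MeasurableSet[F ((j+1)*k)] (A j) :=
    fun j => measurableSet_le measurable_const (hSm j).measurable
  have hAm0 : ∀ j, MeasurableSet[m0] (A j) := fun j => (F.le _) _ (hAm j)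
  have hBint : ∀ j, Integrable (B j) μ :=
    fun j => (integrable_const (1:ℝ)).indicator (hAm0 j)
  have hXeq : ∀ j, X j = fun ω => 1 - (2/3) * B j ω := by
    intro j
    funext ω
    by_cases hω : ω ∈ A j
    · simp only [hXdef, hBdef, Set.indicator_of_mem hω, mul_one]
      rw [hLdef, ← Real.log_inv, Real.exp_log (by norm_num)]
      norm_num
    · simp only [hXdef, hBdef, Set.indicator_of_notMem hω, mul_zero, Real.exp_zero]
      norm_num
  have hXm : ∀ j, StronglyMeasurable[F ((j+1)*k)] (X j) := by
    intro j
    rw [hXeq j]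
    exact stronglyMeasurable_const.sub
      (stronglyMeasurable_const.mul (stronglyMeasurable_const.indicator (hAm j)))
  have hX01 : ∀ j ω, 0 < X j ω ∧ X j ω ≤ 1 := by
    intro j ω
    refine ⟨Real.exp_pos _, ?_⟩
    rw [hXeq j]
    have := (hB01 j ω).1
    linarith
  have hXint : ∀ j, Integrable (X j) μ := by
    intro j
    rw [hXeq j]
    exact (integrable_const (1:ℝ)).sub ((hBint j).const_mul _)
  -- conditional-expectation lower bound on block indicators
  have hcondB : ∀ j, ∀ᵐ ω ∂μ, p/2 ≤ (μ[B j|F (j*k)]) ω := by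
    intro j
    have h := condexp_block_lb (F.le (j*k)) μ (fun i => Z (j*k + i))
      (fun i => hZm _) k hk ν p hν hp0 (hbmsb (j*k))
    exact h
  -- conditional-expectation upper bound on X
  have hcondX : ∀ m : ℕ, ∀ᵐ ω ∂μ, (μ[X m|F (m*k)]) ω ≤ 1 - p/3 := by
    intro m
    have h1 : X m = (fun _ => (1:ℝ)) + (-(2/3):ℝ) • B m := by
      rw [hXeq m]; funext ω; simp [smul_eq_mul]; ring
    have h2 := condExp_add (μ := μ) (m := F (m*k)) (integrable_const (1:ℝ))
      ((hBint m).smul (-(2/3):ℝ))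
    have h3 := condExp_smul (μ := μ) (m := F (m*k)) (-(2/3):ℝ) (B m)
    have h4 := condExp_const (F.le (m*k)) (1:ℝ) (μ := μ)
    rw [h1]
    filter_upwards [h2, h3, hcondB m] with ω h2 h3 hB
    rw [h2]
    have h4' := congrFun h4 ω
    simp only [Pi.add_apply, Pi.smul_apply, smul_eq_mul] at *
    rw [h3, h4']
    nlinarith [hB]
  -- product measurability
  have hprodm : ∀ m : ℕ, StronglyMeasurable[F (m*k)] (fun ω => ∏ j ∈ Finset.range m, X j ω) := by
    intro m
    apply Finset.stronglyMeasurable_fun_prod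
    intro j hj
    have hj' : (j+1)*k ≤ m*k := by
      have : j + 1 ≤ m := Finset.mem_range.1 hj
      exact Nat.mul_le_mul_right _ this
    exact (hXm j).mono (F.mono hj')
  have hprodpos : ∀ m ω, 0 < ∏ j ∈ Finset.range m, X j ω :=
    fun m ω => Finset.prod_pos (fun j _ => (hX01 j ω).1)
  have hprodle1 : ∀ m ω, ∏ j ∈ Finset.range m, X j ω ≤ 1 := by
    intro m ω
    apply Finset.prod_le_one (fun j _ => (hX01 j ω).1.le) (fun j _ => (hX01 j ω).2)
  have hprodint : ∀ m : ℕ, Integrable (fun ω => ∏ j ∈ Finset.range m, X j ω) μ := by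
    intro m
    apply (integrable_const (1:ℝ)).mono'
      (((hprodm m).mono (F.le _)).aestronglyMeasurable)
    apply Filter.Eventually.of_forall
    intro ω
    rw [Real.norm_eq_abs, abs_of_pos (hprodpos m ω)]
    exact hprodle1 m ω
  -- the key induction
  have key : ∀ m : ℕ, ∫ ω, ∏ j ∈ Finset.range m, X j ω ∂μ ≤ (1 - p/3)^m := by
    intro m
    induction m with
    | zero => simp
    | succ m ih =>
      have hfXint : Integrable ((fun ω => ∏ j ∈ Finset.range m, X j ω) * X m) μ := by
        have : ((fun ω => ∏ j ∈ Finset.range m, X j ω) * X m)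
            = fun ω => ∏ j ∈ Finset.range (m+1), X j ω := by
          funext ω; simp [Finset.prod_range_succ]
        rw [this]; exact hprodint (m+1)
      have hpull := condExp_mul_of_stronglyMeasurable_left (μ := μ) (hprodm m) hfXint (hXint m)
      calc ∫ ω, ∏ j ∈ Finset.range (m+1), X j ω ∂μ
          = ∫ ω, ((fun ω => ∏ j ∈ Finset.range m, X j ω) * X m) ω ∂μ := by
            congr 1; funext ω; simp [Finset.prod_range_succ]
        _ = ∫ ω, (μ[(fun ω => ∏ j ∈ Finset.range m, X j ω) * X m|F (m*k)]) ω ∂μ :=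
            (integral_condExp (F.le (m*k))).symm
        _ = ∫ ω, (∏ j ∈ Finset.range m, X j ω) * (μ[X m|F (m*k)]) ω ∂μ := by
            apply integral_congr_ae
            filter_upwards [hpull] with ω hω
            rw [hω]; rfl
        _ ≤ ∫ ω, (1 - p/3) * ∏ j ∈ Finset.range m, X j ω ∂μ := by
            apply integral_mono_ae
            · exact (integrable_condExp).congr hpull
            · exact (hprodint m).const_mul _
            · filter_upwards [hcondX m] with ω hω
              rw [mul_comm ((1:ℝ) - p/3)]
              exact mul_le_mul_of_nonneg_left hω (hprodpos m ω).le
        _ = (1 - p/3) * ∫ ω, ∏ j ∈ Finset.range m, X j ω ∂μ := integral_const_mul _ _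
        _ ≤ (1 - p/3) * (1 - p/3)^m :=
            mul_le_mul_of_nonneg_left ih (by linarith)
        _ = (1 - p/3)^(m+1) := (pow_succ' _ _).symm
  -- the event
  set E := {ω | ∑ t ∈ Finset.Icc 1 T, (Z t ω) ^ 2 ≤ ν ^ 2 * p ^ 2 / 8 * ((k:ℝ) * (n:ℝ))} with hEdef
  have hEmeas : MeasurableSet[m0] E := by
    apply measurableSet_le
    · exact Finset.measurable_sum _ (fun t _ => (hZm t).pow_const 2)
    · exact measurable_const
  -- pointwise bound on the event
  have hEbound : ∀ ω ∈ E, Real.exp (-(L * (p * n) / 4)) ≤ ∏ j ∈ Finset.range n, X j ω := by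
    intro ω hω
    have hprod : ∏ j ∈ Finset.range n, X j ω
        = Real.exp (∑ j ∈ Finset.range n, -L * B j ω) := by
      rw [Real.exp_sum]
    rw [hprod, Real.exp_le_exp]
    have hsumB : ∑ j ∈ Finset.range n, B j ω ≤ p * n / 4 := by
      have hterm : ∀ j ∈ Finset.range n, ν^2 * p * k / 2 * B j ω ≤ S j ω := by
        intro j _
        by_cases hj : ω ∈ A j
        · simp only [hBdef, Set.indicator_of_mem hj, mul_one]
          exact hj
        · simp only [hBdef, Set.indicator_of_notMem hj, mul_zero]
          apply Finset.sum_nonneg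
          intro i _
          positivity
      have h1 : ν^2 * p * k / 2 * ∑ j ∈ Finset.range n, B j ω
          ≤ ∑ j ∈ Finset.range n, S j ω := by
        rw [Finset.mul_sum]
        exact Finset.sum_le_sum hterm
      have h2 : ∑ j ∈ Finset.range n, S j ω = ∑ t ∈ Finset.Icc 1 (n*k), (Z t ω)^2 :=
        (sum_blocks (fun t => (Z t ω)^2) n k).symm
      have h3 : ∑ t ∈ Finset.Icc 1 (n*k), (Z t ω)^2 ≤ ∑ t ∈ Finset.Icc 1 T, (Z t ω)^2 := by
        apply Finset.sum_le_sum_of_subset_of_nonneg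
        · apply Finset.Icc_subset_Icc_right
          rw [hn]
          exact Nat.div_mul_le_self T k
        · intro t _ _; positivity
      have h4 : (∑ t ∈ Finset.Icc 1 T, (Z t ω)^2 : ℝ) ≤ ν ^ 2 * p ^ 2 / 8 * ((k:ℝ) * (n:ℝ)) := hω
      have h5 : (ν ^ 2 * p ^ 2 / 8 * ((k:ℝ) * (n:ℝ)) : ℝ) = ν^2 * p * k / 2 * (p * n / 4) := by
        push_cast
        ring
      have hc : (0:ℝ) < ν^2 * p * k / 2 := by
        have : (0:ℝ) < k := by exact_mod_cast hk
        positivity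
      have := h1.trans (h2.le.trans (h3.trans (h4.trans_eq h5)))
      exact le_of_mul_le_mul_left this hc
    have : ∑ j ∈ Finset.range n, -L * B j ω = -L * ∑ j ∈ Finset.range n, B j ω := by
      rw [← Finset.mul_sum]
    rw [this]
    have := mul_le_mul_of_nonneg_left hsumB hL0
    nlinarith [this]
  -- Markov step
  have hMarkov : (μ E).toReal * Real.exp (-(L * (p * n) / 4))
      ≤ ∫ ω, ∏ j ∈ Finset.range n, X j ω ∂μ := by
    have h1 : (μ E).toReal * Real.exp (-(L * (p * n) / 4))
        = ∫ _ in E, Real.exp (-(L * (p * n) / 4)) ∂μ := by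
      rw [setIntegral_const, smul_eq_mul]; rfl
    rw [h1]
    calc ∫ _ in E, Real.exp (-(L * (p * n) / 4)) ∂μ
        ≤ ∫ ω in E, ∏ j ∈ Finset.range n, X j ω ∂μ := by
          apply setIntegral_mono_on (integrable_const _).integrableOn
            (hprodint n).integrableOn hEmeas
          intro ω hω
          exact hEbound ω hω
      _ ≤ ∫ ω, ∏ j ∈ Finset.range n, X j ω ∂μ :=
          setIntegral_le_integral (hprodint n)
            (Filter.Eventually.of_forall (fun ω => (hprodpos n ω).le))
  -- conclude
  have hgoal : (μ E).toReal ≤ Real.exp (L * (p * n) / 4) * (1 - p/3)^n := by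
    have h2 := hMarkov.trans (key n)
    have hep : (0:ℝ) < Real.exp (-(L * (p * n) / 4)) := Real.exp_pos _
    rw [← le_div_iff₀ hep] at h2
    rwa [div_eq_mul_inv, ← Real.exp_neg, neg_neg, mul_comm ((1 - p/3)^n)] at h2
  have hfinal : Real.exp (L * (p * n) / 4) * (1 - p/3)^n
      ≤ Real.exp (-(n:ℝ) * p^2 / 8) := by
    have h6 : (1 - p/3)^n ≤ Real.exp (-(p^2/8) - p * L / 4) ^ n :=
      pow_le_pow_left₀ (by linarith) (one_sub_third_le_exp hp0.le hp1) n
    have h7 : Real.exp (-(p^2/8) - p * L / 4) ^ n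
        = Real.exp ((n:ℝ) * (-(p^2/8) - p * L / 4)) := (Real.exp_nat_mul _ n).symm
    calc Real.exp (L * (p * n) / 4) * (1 - p/3)^n
        ≤ Real.exp (L * (p * n) / 4) * Real.exp ((n:ℝ) * (-(p^2/8) - p * L / 4)) := by
          rw [← h7]
          exact mul_le_mul_of_nonneg_left h6 (Real.exp_pos _).le
      _ = Real.exp (L * (p * n) / 4 + (n:ℝ) * (-(p^2/8) - p * L / 4)) :=
          (Real.exp_add _ _).symm
      _ = Real.exp (-(n:ℝ) * p^2 / 8) := by ring_nf
  exact hgoal.trans hfinal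
end
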